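/- arXiv:1603.07958 — 3 statements merged into one kernel-verified Lean document; each statement's English description precedes it below -/
import Mathlib

section
/- Let $V$ be a vertex algebra and $M$ a $V$-module. Then any $V$-module satisfies weak commutativity (locality): for all $a, b \in V$ there exists $k \in \mathbb{N}$ such that $(x-y)^k\, a\,{}_x\,(b\,{}_y\, u) = (x-y)^k\, b\,{}_y\,(a\,{}_x\, u)$ for all $u \in M$. -/
/- Coefficient-wise formalization of vertex algebras:
a series `w ∈ V((z))` is encoded by its coefficient function `ℤ → V`
(the value at `n` being the coefficient of `z^n`), and a field/product
`a ⊗ b ↦ a_z b ∈ V((z))` by a map `V → V → ℤ → V`. -/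

namespace VertexCohomology

open scoped BigOperators

section Defs

variable (𝕜 : Type*) [Field 𝕜] [CharZero 𝕜]
variable {V W M : Type*} [AddCommGroup V] [Module 𝕜 V] [AddCommGroup M] [Module 𝕜 M]

/-- Coefficient of `z^n` in `e^{z d} w(z)`, where `w` is a series with coefficients `w n`. -/
noncomputable def ezd (d : M →ₗ[𝕜] M) (w : ℤ → M) : ℤ → M :=
  fun n => ∑ᶠ k : ℕ, ((k.factorial : 𝕜)⁻¹) • (d ^ k) (w (n - (k : ℤ)))

/-- Coefficient of `z^n` in `w(-z)`. -/
def negz (w : ℤ → M) : ℤ → M := fun n => ((n.negOnePow : ℤ)) • w n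

/-- Coefficient of `z^n` in `(d/dz) w(z)`. -/
def derivz (w : ℤ → M) : ℤ → M := fun n => (n + 1) • w (n + 1)

/-- The constant series with value `a`. -/
def unitSeries (a : M) : ℤ → M := fun n => if n = 0 then a else 0

/-- Coefficient of `z^m w^n` in `(z+w)^l · F(z,w)`, where `F m n` is the coefficient
of `z^m w^n` of a formal series in two variables. -/
def mulZW (l : ℕ) (F : ℤ → ℤ → M) : ℤ → ℤ → M :=
  fun m n => ∑ k ∈ Finset.range (l + 1), (l.choose k : ℤ) • F (m - ((l - k : ℕ) : ℤ)) (n - (k : ℤ))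

/-- Coefficient of `x^m y^n` in `(x-y)^l · F(x,y)`. -/
def mulZmW (l : ℕ) (F : ℤ → ℤ → M) : ℤ → ℤ → M :=
  fun m n => ∑ k ∈ Finset.range (l + 1),
    ((-1 : ℤ) ^ k * (l.choose k : ℤ)) • F (m - ((l - k : ℕ) : ℤ)) (n - (k : ℤ))

/-- Coefficient of `z^m w^n` in `F(a, ·)_{z+w}` applied to the series `u` in the
variable `w`; here `(z+w)^j` is expanded in nonnegative powers of `w`:
`(z+w)^j = ∑_{i ≥ 0} C(j,i) z^{j-i} w^i`. -/
noncomputable def shiftComp (F : V → W → ℤ → M) (a : V) (u : ℤ → W) : ℤ → ℤ → M :=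
  fun m n => ∑ᶠ i : ℕ, (Ring.choose (m + (i : ℤ)) i) • F a (u (n - (i : ℤ))) (m + (i : ℤ))

/-- The axioms of a vertex algebra, stated coefficient-wise:
`Y a b n` is the coefficient of `z^n` in `a_z b`. -/
structure IsVertexAlg (Y : V → V → ℤ → V) (one : V) (D : V →ₗ[𝕜] V) : Prop where
  linear_left : ∀ (b : V) (n : ℤ), IsLinearMap 𝕜 (fun a => Y a b n)
  linear_right : ∀ (a : V) (n : ℤ), IsLinearMap 𝕜 (fun b => Y a b n)
  trunc : ∀ a b, ∃ N : ℤ, ∀ n < N, Y a b n = 0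
  unit_left : ∀ a, Y one a = unitSeries a
  unit_right : ∀ a, Y a one = ezd 𝕜 D (unitSeries a)
  transl : ∀ a b, Y (D a) b = derivz (Y a b)
  derivation : ∀ a b n, D (Y a b n) = Y (D a) b n + Y a (D b) n
  comm : ∀ a b, Y a b = ezd 𝕜 D (negz (Y b a))
  assoc : ∀ a b c, ∃ l : ℕ,
    mulZW l (fun m n => Y (Y a b m) c n) = mulZW l (shiftComp Y a (Y b c))

/-- The axioms of a module over a vertex algebra, stated coefficient-wise. -/
structure IsVModule (Y : V → V → ℤ → V) (one : V) (D : V →ₗ[𝕜] V)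
    (YM : V → M → ℤ → M) (d : M →ₗ[𝕜] M) : Prop where
  linear_left : ∀ (u : M) (n : ℤ), IsLinearMap 𝕜 (fun a => YM a u n)
  linear_right : ∀ (a : V) (n : ℤ), IsLinearMap 𝕜 (fun u => YM a u n)
  trunc : ∀ a u, ∃ N : ℤ, ∀ n < N, YM a u n = 0
  unit : ∀ u, YM one u = unitSeries u
  transl : ∀ a u, YM (D a) u = derivz (YM a u)
  derivation : ∀ a u n, d (YM a u n) = YM (D a) u n + YM a (d u) n
  assoc : ∀ a b u, ∃ l : ℕ,
    mulZW l (fun m n => YM (Y a b m) u n) = mulZW l (shiftComp YM a (YM b u))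

/-- The right action `u_z a := e^{z d}(a_{-z} u)` of `V` on `M`. -/
noncomputable def rAct (YM : V → M → ℤ → M) (d : M →ₗ[𝕜] M) (u : M) (a : V) : ℤ → M :=
  ezd 𝕜 d (negz (YM a u))

/-- `(δ₁ g)_z (a,b) = a_z g(b) - g(a_z b) + g(a)_z b`. -/
noncomputable def delta1 (Y : V → V → ℤ → V) (YM : V → M → ℤ → M) (d : M →ₗ[𝕜] M)
    (g : V → M) (a b : V) : ℤ → M :=
  fun n => YM a (g b) n - g (Y a b n) + rAct 𝕜 YM d (g a) b n

/-- Membership in `C²(V,M)`. -/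
structure IsC2 (one : V) (D : V →ₗ[𝕜] V) (d : M →ₗ[𝕜] M) (f : V → V → ℤ → M) : Prop where
  linear_left : ∀ (b : V) (n : ℤ), IsLinearMap 𝕜 (fun a => f a b n)
  linear_right : ∀ (a : V) (n : ℤ), IsLinearMap 𝕜 (fun b => f a b n)
  trunc : ∀ a b, ∃ N : ℤ, ∀ n < N, f a b n = 0
  unit_right : ∀ a, f a one = 0
  unit_left : ∀ b, f one b = 0
  transl : ∀ a b, derivz (f a b) = f (D a) b
  derivation : ∀ a b n, d (f a b n) = f (D a) b n + f a (D b) n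
  symm : ∀ a b, f a b = ezd 𝕜 d (negz (f b a))

/-- The 2-cocycle condition: for all `a,b,c` there is `N` with
`(x+z)^N [f_z(a_x b, c) + f_x(a,b)_z c] = (x+z)^N [a_{x+z} f_z(b,c) + f_{x+z}(a, b_z c)]`,
coefficients taken at `x^m z^n`, `(x+z)^j` expanded in nonnegative powers of `z`. -/
def Cocycle (Y : V → V → ℤ → V) (YM : V → M → ℤ → M) (d : M →ₗ[𝕜] M)
    (f : V → V → ℤ → M) : Prop :=
  ∀ a b c : V, ∃ N : ℕ,
    mulZW N (fun m n => f (Y a b m) c n + rAct 𝕜 YM d (f a b m) c n)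
      = mulZW N (fun m n => shiftComp YM a (f b c) m n + shiftComp f a (Y b c) m n)

/-- The square-zero extension product on `V ⊕ M`:
`(a,u)_z (b,v) = (a_z b, a_z v + u_z b + ψ_z(a,b))`. -/
noncomputable def extY (Y : V → V → ℤ → V) (YM : V → M → ℤ → M) (d : M →ₗ[𝕜] M)
    (ψ : V → V → ℤ → M) : V × M → V × M → ℤ → V × M :=
  fun p q n => (Y p.1 q.1 n, YM p.1 q.2 n + rAct 𝕜 YM d p.2 q.1 n + ψ p.1 q.1 n)

/-- The first-order deformed product on `V[t]/(t²) ≃ V × V` (first component the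
constant term, second the coefficient of `t`): `a_z^t b = a_z b + t f_z(a,b)`. -/
def defY (Y : V → V → ℤ → V) (f : V → V → ℤ → V) : V × V → V × V → ℤ → V × V :=
  fun p q n => (Y p.1 q.1 n, Y p.1 q.2 n + Y p.2 q.1 n + f p.1 q.1 n)

end Defs

section AuxKey

open Finset


variable {M : Type*} [AddCommGroup M]

/-- coefficient of the expansion of `(x1-x2)^{-...}`-type substitution -/
def ccoef (x : ℤ) (i : ℕ) : ℤ := (-1:ℤ)^i * Ring.choose (x + (i:ℤ)) i

def dcoef (p q : ℤ) (j : ℕ) : ℤ := ((p - (j:ℤ)).negOnePow : ℤ) * Ring.choose (q + (j:ℤ)) j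

lemma rc_pascal (x : ℤ) (k : ℕ) :
    Ring.choose (x+1) (k+1) = Ring.choose x k + Ring.choose x (k+1) :=
  Ring.choose_succ_succ x k

@[simp] lemma ccoef_zero (x : ℤ) : ccoef x 0 = 1 := by
  simp [ccoef, Ring.choose_zero_right]

@[simp] lemma dcoef_zero (p q : ℤ) : dcoef p q 0 = ((p.negOnePow : ℤ)) := by
  simp [dcoef, Ring.choose_zero_right]

lemma ccoef_succ (m : ℤ) (k : ℕ) : ccoef (m-1) (k+1) = ccoef m (k+1) + ccoef m k := by
  unfold ccoef
  have h1 : m - 1 + ((k+1:ℕ):ℤ) = (m + k) := by push_cast; ring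
  have h2 : m + ((k+1:ℕ):ℤ) = (m + k) + 1 := by push_cast; ring
  rw [h1, h2, rc_pascal]
  push_cast
  ring

lemma negOnePow_sub_one (x : ℤ) : (((x - 1).negOnePow : ℤ)) = -((x.negOnePow : ℤ)) := by
  have h := Int.negOnePow_succ (x-1)
  rw [sub_add_cancel] at h
  rw [h]
  push_cast
  ring

lemma dcoef_succ (p q : ℤ) (k : ℕ) : dcoef p (q-1) (k+1) = dcoef p q (k+1) + dcoef p q k := by
  unfold dcoef
  have h1 : q - 1 + ((k+1:ℕ):ℤ) = (q + k) := by push_cast; ring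
  have h2 : q + ((k+1:ℕ):ℤ) = (q + k) + 1 := by push_cast; ring
  have h3 : p - ((k+1:ℕ):ℤ) = (p - (k:ℤ)) - 1 := by push_cast; ring
  have h4 : ((((p - (k:ℤ)) - 1).negOnePow : ℤ)) = -((p - (k:ℤ)).negOnePow : ℤ) := by
    have := Int.negOnePow_succ (p - (k:ℤ) - 1)
    simp only [sub_add_cancel] at this
    rw [this]; push_cast; ring
  rw [h1, h2, h3, rc_pascal, h4]
  push_cast
  ring

/-- generic telescoping core -/
lemma core_sum (e e' : ℕ → ℤ) (h0 : e' 0 = e 0) (hs : ∀ k, e' (k+1) = e (k+1) + e k)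
    (H : ℕ → M) (J : ℕ) (hH : ∀ i, J ≤ i → H i = 0) :
    ∑ i ∈ range (J+1), e' i • H i
      = ∑ i ∈ range (J+1), e i • H i + ∑ i ∈ range (J+1), e i • H (i+1) := by
  rw [Finset.sum_range_succ' (fun i => e' i • H i) J,
    Finset.sum_range_succ' (fun i => e i • H i) J]
  have h1 : ∀ k ∈ range J, e' (k+1) • H (k+1) = e (k+1) • H (k+1) + e k • H (k+1) := by
    intro k _; rw [hs k, add_smul]
  rw [Finset.sum_congr rfl h1, Finset.sum_add_distrib, h0]
  have h2 : ∑ k ∈ range (J+1), e k • H (k+1)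
      = ∑ k ∈ range J, e k • H (k+1) := by
    rw [Finset.sum_range_succ, hH (J+1) (by omega), smul_zero, add_zero]
  rw [h2]
  abel

/-- series with coefficientwise substitution x0 = x1 - x2 (nonneg powers of x2) -/
noncomputable def phiF (F : ℤ → ℤ → M) (m n : ℤ) : M :=
  ∑ᶠ i : ℕ, ccoef m i • F (m + (i:ℤ)) (n - (i:ℤ))

noncomputable def tauF (F : ℤ → ℤ → M) (p q : ℤ) : M :=
  ∑ᶠ j : ℕ, dcoef p q j • F (p - (j:ℤ)) (q + (j:ℤ))

def QT (N : ℤ) (F : ℤ → ℤ → M) : Prop := ∀ p q : ℤ, q < N → F p q = 0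
def PT (c : ℤ) (F : ℤ → ℤ → M) : Prop := ∀ p q : ℤ, p < c → F p q = 0

lemma fin2 (f : ℕ → M) (I : ℕ) (h : ∀ i, I ≤ i → f i = 0) :
    (∑ᶠ i : ℕ, f i) = ∑ i ∈ range I, f i := by
  apply finsum_eq_sum_of_support_subset
  intro i hi
  simp only [Function.mem_support] at hi
  simp only [coe_range, Set.mem_Iio]
  by_contra hcon
  exact hi (h i (by omega))

lemma phiF_eq (F : ℤ → ℤ → M) (N : ℤ) (hF : QT N F) (m n : ℤ) {I : ℕ} (hI : n - N < I) :
    phiF F m n = ∑ i ∈ range I, ccoef m i • F (m + (i:ℤ)) (n - (i:ℤ)) := by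
  apply fin2
  intro i hi
  rw [hF _ _ (by omega : n - (i:ℤ) < N), smul_zero]

lemma tauF_eq (F : ℤ → ℤ → M) (c : ℤ) (hF : PT c F) (p q : ℤ) {J : ℕ} (hJ : p - c < J) :
    tauF F p q = ∑ j ∈ range J, dcoef p q j • F (p - (j:ℤ)) (q + (j:ℤ)) := by
  apply fin2
  intro j hj
  rw [hF _ _ (by omega : p - (j:ℤ) < c), smul_zero]

/-- local copy of the two-variable multiplication operators (to develop lemmas) -/
def mulZW' (l : ℕ) (F : ℤ → ℤ → M) : ℤ → ℤ → M :=
  fun m n => ∑ k ∈ Finset.range (l + 1), (l.choose k : ℤ) • F (m - ((l - k : ℕ) : ℤ)) (n - (k : ℤ))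

def mulZmW' (l : ℕ) (F : ℤ → ℤ → M) : ℤ → ℤ → M :=
  fun m n => ∑ k ∈ Finset.range (l + 1),
    ((-1 : ℤ) ^ k * (l.choose k : ℤ)) • F (m - ((l - k : ℕ) : ℤ)) (n - (k : ℤ))

lemma mulZW'_zero (F : ℤ → ℤ → M) : mulZW' 0 F = F := by
  funext m n; simp [mulZW']

lemma mulZmW'_zero (F : ℤ → ℤ → M) : mulZmW' 0 F = F := by
  funext m n; simp [mulZmW']

lemma mulZW'_one (G : ℤ → ℤ → M) (m n : ℤ) : mulZW' 1 G m n = G (m-1) n + G m (n-1) := by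
  simp [mulZW', Finset.sum_range_succ]

lemma QT_mulZW' (N : ℤ) (l : ℕ) (F : ℤ → ℤ → M) (hF : QT N F) : QT N (mulZW' l F) := by
  intro p q hq
  unfold mulZW'
  refine Finset.sum_eq_zero fun k _ => ?_
  rw [hF _ _ (by omega : q - (k:ℤ) < N), smul_zero]

lemma PT_mulZW' (c : ℤ) (l : ℕ) (F : ℤ → ℤ → M) (hF : PT c F) : PT c (mulZW' l F) := by
  intro p q hp
  unfold mulZW'
  refine Finset.sum_eq_zero fun k _ => ?_
  rw [hF _ _ (by omega : p - ((l - k : ℕ):ℤ) < c), smul_zero]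

lemma mulZW'_comp (l : ℕ) (F : ℤ → ℤ → M) :
    mulZW' 1 (mulZW' l F) = mulZW' (l+1) F := by
  funext m n
  rw [mulZW'_one]
  show (∑ k ∈ range (l+1), (l.choose k : ℤ) • F (m - 1 - ((l - k : ℕ) : ℤ)) (n - (k:ℤ)))
      + (∑ k ∈ range (l+1), (l.choose k : ℤ) • F (m - ((l - k : ℕ) : ℤ)) (n - 1 - (k:ℤ)))
      = ∑ k ∈ range (l+2), ((l+1).choose k : ℤ) • F (m - ((l + 1 - k : ℕ) : ℤ)) (n - (k:ℤ))
  rw [Finset.sum_range_succ' (fun k => ((l+1).choose k : ℤ) • F (m - ((l + 1 - k : ℕ) : ℤ)) (n - (k:ℤ))) (l+1)]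
  have hsplit : ∀ k ∈ range (l+1),
      ((l+1).choose (k+1) : ℤ) • F (m - ((l + 1 - (k+1) : ℕ) : ℤ)) (n - ((k+1:ℕ):ℤ))
      = (l.choose k : ℤ) • F (m - ((l - k : ℕ) : ℤ)) (n - 1 - (k:ℤ))
        + (l.choose (k+1) : ℤ) • F (m - ((l - k : ℕ) : ℤ)) (n - 1 - (k:ℤ)) := by
    intro k hk
    have h1 : (l + 1 - (k+1) : ℕ) = (l - k : ℕ) := by omega
    have h2 : n - ((k+1:ℕ):ℤ) = n - 1 - (k:ℤ) := by push_cast; ring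
    rw [h1, h2, Nat.choose_succ_succ]
    push_cast
    rw [add_smul]
  rw [Finset.sum_congr rfl hsplit, Finset.sum_add_distrib]
  have hfirst : ∑ k ∈ range (l+1), (l.choose k : ℤ) • F (m - 1 - ((l - k : ℕ) : ℤ)) (n - (k:ℤ))
      = (∑ k ∈ range (l+1), (l.choose (k+1) : ℤ) • F (m - ((l - k : ℕ) : ℤ)) (n - 1 - (k:ℤ)))
        + ((l+1).choose 0 : ℤ) • F (m - ((l + 1 - 0 : ℕ) : ℤ)) (n - ((0:ℕ):ℤ)) := by
    rw [Finset.sum_range_succ' (fun k => (l.choose k : ℤ) • F (m - 1 - ((l - k : ℕ) : ℤ)) (n - (k:ℤ))) l]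
    have hcong : ∀ k ∈ range l,
        (l.choose (k+1) : ℤ) • F (m - 1 - ((l - (k+1) : ℕ) : ℤ)) (n - ((k+1:ℕ):ℤ))
        = (l.choose (k+1) : ℤ) • F (m - ((l - k : ℕ) : ℤ)) (n - 1 - (k:ℤ)) := by
      intro k hk
      have hkl : k < l := mem_range.mp hk
      have h1 : m - 1 - ((l - (k+1) : ℕ) : ℤ) = m - ((l - k : ℕ) : ℤ) := by
        have : (l - k : ℕ) = (l - (k+1) : ℕ) + 1 := by omega
        rw [this]; push_cast; ring
      have h2 : n - ((k+1:ℕ):ℤ) = n - 1 - (k:ℤ) := by push_cast; ring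
      rw [h1, h2]
    rw [Finset.sum_congr rfl hcong]
    have htail : ∑ k ∈ range (l+1), (l.choose (k+1) : ℤ) • F (m - ((l - k : ℕ) : ℤ)) (n - 1 - (k:ℤ))
        = ∑ k ∈ range l, (l.choose (k+1) : ℤ) • F (m - ((l - k : ℕ) : ℤ)) (n - 1 - (k:ℤ)) := by
      rw [Finset.sum_range_succ, Nat.choose_succ_self]
      simp
    rw [htail]
    have hhead : (l.choose 0 : ℤ) • F (m - 1 - ((l - 0 : ℕ) : ℤ)) (n - ((0:ℕ):ℤ))
        = ((l+1).choose 0 : ℤ) • F (m - ((l + 1 - 0 : ℕ) : ℤ)) (n - ((0:ℕ):ℤ)) := by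
      have : m - 1 - ((l - 0 : ℕ) : ℤ) = m - ((l + 1 - 0 : ℕ) : ℤ) := by
        simp; push_cast; ring
      rw [this]; simp
    rw [hhead]
  rw [hfirst]
  abel

lemma mulZmW'_succ (k : ℕ) (H : ℤ → ℤ → M) (m n : ℤ) :
    mulZmW' (k+1) H m n = mulZmW' k H (m-1) n - mulZmW' k H m (n-1) := by
  show ∑ j ∈ range (k+2), ((-1:ℤ)^j * ((k+1).choose j : ℤ)) • H (m - ((k + 1 - j : ℕ) : ℤ)) (n - (j:ℤ))
      = (∑ j ∈ range (k+1), ((-1:ℤ)^j * (k.choose j : ℤ)) • H (m - 1 - ((k - j : ℕ) : ℤ)) (n - (j:ℤ)))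
      - ∑ j ∈ range (k+1), ((-1:ℤ)^j * (k.choose j : ℤ)) • H (m - ((k - j : ℕ) : ℤ)) (n - 1 - (j:ℤ))
  rw [Finset.sum_range_succ' (fun j => ((-1:ℤ)^j * ((k+1).choose j : ℤ)) • H (m - ((k + 1 - j : ℕ) : ℤ)) (n - (j:ℤ))) (k+1)]
  have hsplit : ∀ j ∈ range (k+1),
      ((-1:ℤ)^(j+1) * ((k+1).choose (j+1) : ℤ)) • H (m - ((k + 1 - (j+1) : ℕ) : ℤ)) (n - ((j+1:ℕ):ℤ))
      = -(((-1:ℤ)^j * (k.choose j : ℤ)) • H (m - ((k - j : ℕ) : ℤ)) (n - 1 - (j:ℤ)))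
        - ((-1:ℤ)^j * (k.choose (j+1) : ℤ)) • H (m - ((k - j : ℕ) : ℤ)) (n - 1 - (j:ℤ)) := by
    intro j hj
    have h1 : (k + 1 - (j+1) : ℕ) = (k - j : ℕ) := by omega
    have h2 : n - ((j+1:ℕ):ℤ) = n - 1 - (j:ℤ) := by push_cast; ring
    rw [h1, h2, Nat.choose_succ_succ, ← neg_smul, ← sub_smul]
    congr 1
    push_cast
    ring
  rw [Finset.sum_congr rfl hsplit, Finset.sum_sub_distrib, Finset.sum_neg_distrib]
  have hfirst : ∑ j ∈ range (k+1), ((-1:ℤ)^j * (k.choose j : ℤ)) • H (m - 1 - ((k - j : ℕ) : ℤ)) (n - (j:ℤ))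
      = (-(∑ j ∈ range (k+1), ((-1:ℤ)^j * (k.choose (j+1) : ℤ)) • H (m - ((k - j : ℕ) : ℤ)) (n - 1 - (j:ℤ))))
        + ((-1:ℤ)^0 * ((k+1).choose 0 : ℤ)) • H (m - ((k + 1 - 0 : ℕ) : ℤ)) (n - ((0:ℕ):ℤ)) := by
    rw [Finset.sum_range_succ' (fun j => ((-1:ℤ)^j * (k.choose j : ℤ)) • H (m - 1 - ((k - j : ℕ) : ℤ)) (n - (j:ℤ))) k]
    have hcong : ∀ j ∈ range k,
        ((-1:ℤ)^(j+1) * (k.choose (j+1) : ℤ)) • H (m - 1 - ((k - (j+1) : ℕ) : ℤ)) (n - ((j+1:ℕ):ℤ))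
        = -(((-1:ℤ)^j * (k.choose (j+1) : ℤ)) • H (m - ((k - j : ℕ) : ℤ)) (n - 1 - (j:ℤ))) := by
      intro j hj
      have hkl : j < k := mem_range.mp hj
      have h1 : m - 1 - ((k - (j+1) : ℕ) : ℤ) = m - ((k - j : ℕ) : ℤ) := by
        have : (k - j : ℕ) = (k - (j+1) : ℕ) + 1 := by omega
        rw [this]; push_cast; ring
      have h2 : n - ((j+1:ℕ):ℤ) = n - 1 - (j:ℤ) := by push_cast; ring
      rw [h1, h2, ← neg_smul]
      congr 1
      ring
    rw [Finset.sum_congr rfl hcong, Finset.sum_neg_distrib]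
    have htail : ∑ j ∈ range (k+1), ((-1:ℤ)^j * (k.choose (j+1) : ℤ)) • H (m - ((k - j : ℕ) : ℤ)) (n - 1 - (j:ℤ))
        = ∑ j ∈ range k, ((-1:ℤ)^j * (k.choose (j+1) : ℤ)) • H (m - ((k - j : ℕ) : ℤ)) (n - 1 - (j:ℤ)) := by
      rw [Finset.sum_range_succ, Nat.choose_succ_self]
      simp
    rw [htail]
    have hhead : ((-1:ℤ)^0 * (k.choose 0 : ℤ)) • H (m - 1 - ((k - 0 : ℕ) : ℤ)) (n - ((0:ℕ):ℤ))
        = ((-1:ℤ)^0 * ((k+1).choose 0 : ℤ)) • H (m - ((k + 1 - 0 : ℕ) : ℤ)) (n - ((0:ℕ):ℤ)) := by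
      have : m - 1 - ((k - 0 : ℕ) : ℤ) = m - ((k + 1 - 0 : ℕ) : ℤ) := by
        simp; push_cast; ring
      rw [this]
      simp
    rw [hhead]
  rw [hfirst]
  abel

lemma phiF_mulZW'_one (G : ℤ → ℤ → M) (N : ℤ) (hG : QT N G) (m n : ℤ) :
    phiF (mulZW' 1 G) m n = phiF G (m-1) n := by
  set J : ℕ := (n - N).toNat + 1 with hJdef
  have hJ : n - N < (J:ℤ) := by
    rw [hJdef]; push_cast; omega
  have hJ1 : n - N < ((J+1:ℕ):ℤ) := by push_cast at hJ ⊢; omega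
  rw [phiF_eq (mulZW' 1 G) N (QT_mulZW' N 1 G hG) m n hJ1,
    phiF_eq G N hG (m-1) n hJ1]
  have hsplit : ∀ i ∈ range (J+1),
      ccoef m i • (mulZW' 1 G) (m + (i:ℤ)) (n - (i:ℤ))
      = ccoef m i • G ((m-1) + (i:ℤ)) (n - (i:ℤ))
        + ccoef m i • G ((m-1) + ((i+1:ℕ):ℤ)) (n - ((i+1:ℕ):ℤ)) := by
    intro i _
    rw [mulZW'_one, smul_add]
    have h1 : m + (i:ℤ) - 1 = (m-1) + (i:ℤ) := by ring
    have h2 : m + (i:ℤ) = (m-1) + ((i+1:ℕ):ℤ) := by push_cast; ring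
    have h3 : n - (i:ℤ) - 1 = n - ((i+1:ℕ):ℤ) := by push_cast; ring
    rw [h1, h2, h3]
  rw [Finset.sum_congr rfl hsplit, Finset.sum_add_distrib]
  exact (core_sum (fun i => ccoef m i) (fun i => ccoef (m-1) i)
    (by simp) (fun k => ccoef_succ m k)
    (fun i => G ((m-1) + (i:ℤ)) (n - (i:ℤ))) J
    (fun i hi => hG _ _ (by omega : n - (i:ℤ) < N))).symm

lemma phiF_sigma_one (G : ℤ → ℤ → M) (N : ℤ) (hG : QT N G) (m n : ℤ) :
    phiF (fun p q => G (p-1) q) m n = phiF G (m-1) n - phiF G m (n-1) := by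
  set J : ℕ := (n - N).toNat + 1 with hJdef
  have hJ1 : n - N < ((J+1:ℕ):ℤ) := by rw [hJdef]; push_cast; omega
  have hJ2 : (n-1) - N < ((J+1:ℕ):ℤ) := by rw [hJdef]; push_cast; omega
  have hQT : QT N (fun p q => G (p-1) q) := fun p q hq => hG _ _ hq
  rw [phiF_eq _ N hQT m n hJ1, phiF_eq G N hG (m-1) n hJ1, phiF_eq G N hG m (n-1) hJ2]
  have hC := core_sum (fun i => ccoef m i) (fun i => ccoef (m-1) i)
    (by simp) (fun k => ccoef_succ m k)
    (fun i => G ((m-1) + (i:ℤ)) (n - (i:ℤ))) J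
    (fun i hi => hG _ _ (by omega : n - (i:ℤ) < N))
  have hL : ∑ i ∈ range (J+1), ccoef m i • (fun p q => G (p-1) q) (m + (i:ℤ)) (n - (i:ℤ))
      = ∑ i ∈ range (J+1), ccoef m i • G ((m-1) + (i:ℤ)) (n - (i:ℤ)) := by
    refine Finset.sum_congr rfl fun i _ => ?_
    have h1 : m + (i:ℤ) - 1 = (m-1) + (i:ℤ) := by ring
    simp only [h1]
  have hR : ∑ i ∈ range (J+1), ccoef m i • G ((m-1) + ((i+1:ℕ):ℤ)) (n - ((i+1:ℕ):ℤ))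
      = ∑ i ∈ range (J+1), ccoef m i • G (m + (i:ℤ)) ((n-1) - (i:ℤ)) := by
    refine Finset.sum_congr rfl fun i _ => ?_
    have h2 : (m-1) + ((i+1:ℕ):ℤ) = m + (i:ℤ) := by push_cast; ring
    have h3 : n - ((i+1:ℕ):ℤ) = (n-1) - (i:ℤ) := by push_cast; ring
    rw [h2, h3]
  rw [hL, ← hR]
  beta_reduce at hC
  rw [hC]
  abel

lemma dcoef_pred (p q : ℤ) (j : ℕ) : dcoef (p-1) q j = - dcoef p q j := by
  unfold dcoef
  have h3 : p - 1 - (j:ℤ) = (p - (j:ℤ)) - 1 := by ring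
  rw [h3, negOnePow_sub_one]; ring

lemma tauF_mulZW'_one (F : ℤ → ℤ → M) (c : ℤ) (hF : PT c F) (p q : ℤ) :
    tauF (mulZW' 1 F) p q = tauF F p (q-1) := by
  set J : ℕ := (p - c).toNat + 1 with hJdef
  have hJ1 : p - c < ((J+1:ℕ):ℤ) := by rw [hJdef]; push_cast; omega
  rw [tauF_eq (mulZW' 1 F) c (PT_mulZW' c 1 F hF) p q hJ1, tauF_eq F c hF p (q-1) hJ1]
  have hsplit : ∀ j ∈ range (J+1),
      dcoef p q j • (mulZW' 1 F) (p - (j:ℤ)) (q + (j:ℤ))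
      = dcoef p q j • F (p - (j:ℤ)) ((q-1) + (j:ℤ))
        + dcoef p q j • F (p - ((j+1:ℕ):ℤ)) ((q-1) + ((j+1:ℕ):ℤ)) := by
    intro j _
    rw [mulZW'_one, smul_add, add_comm]
    have h1 : q + (j:ℤ) - 1 = (q-1) + (j:ℤ) := by ring
    have h2 : p - (j:ℤ) - 1 = p - ((j+1:ℕ):ℤ) := by push_cast; ring
    have h3 : q + (j:ℤ) = (q-1) + ((j+1:ℕ):ℤ) := by push_cast; ring
    rw [h1, h2, h3]
  rw [Finset.sum_congr rfl hsplit, Finset.sum_add_distrib]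
  exact (core_sum (fun j => dcoef p q j) (fun j => dcoef p (q-1) j)
    (by simp) (fun k => dcoef_succ p q k)
    (fun j => F (p - (j:ℤ)) ((q-1) + (j:ℤ))) J
    (fun j hj => hF _ _ (by omega : p - (j:ℤ) < c))).symm

lemma tauF_sigma2_one (F : ℤ → ℤ → M) (c : ℤ) (hF : PT c F) (p q : ℤ) :
    tauF (fun x y => F x (y-1)) p q = tauF F (p-1) q + tauF F p (q-1) := by
  set J : ℕ := (p - c).toNat + 1 with hJdef
  have hJ1 : p - c < ((J+1:ℕ):ℤ) := by rw [hJdef]; push_cast; omega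
  have hJ2 : (p-1) - c < ((J+1:ℕ):ℤ) := by rw [hJdef]; push_cast; omega
  have hPT : PT c (fun x y => F x (y-1)) := fun x y hx => hF _ _ hx
  rw [tauF_eq _ c hPT p q hJ1, tauF_eq F c hF (p-1) q hJ2, tauF_eq F c hF p (q-1) hJ1]
  have hC := core_sum (fun j => dcoef p q j) (fun j => dcoef p (q-1) j)
    (by simp) (fun k => dcoef_succ p q k)
    (fun j => F (p - (j:ℤ)) ((q-1) + (j:ℤ))) J
    (fun j hj => hF _ _ (by omega : p - (j:ℤ) < c))
  beta_reduce at hC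
  have hL : ∑ j ∈ range (J+1), dcoef p q j • (fun x y => F x (y-1)) (p - (j:ℤ)) (q + (j:ℤ))
      = ∑ j ∈ range (J+1), dcoef p q j • F (p - (j:ℤ)) ((q-1) + (j:ℤ)) := by
    refine Finset.sum_congr rfl fun j _ => ?_
    have h1 : q + (j:ℤ) - 1 = (q-1) + (j:ℤ) := by ring
    simp only [h1]
  have hM : ∑ j ∈ range (J+1), dcoef (p-1) q j • F ((p-1) - (j:ℤ)) (q + (j:ℤ))
      = - ∑ j ∈ range (J+1), dcoef p q j • F (p - ((j+1:ℕ):ℤ)) ((q-1) + ((j+1:ℕ):ℤ)) := by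
    rw [← Finset.sum_neg_distrib]
    refine Finset.sum_congr rfl fun j _ => ?_
    have h2 : (p-1) - (j:ℤ) = p - ((j+1:ℕ):ℤ) := by push_cast; ring
    have h3 : q + (j:ℤ) = (q-1) + ((j+1:ℕ):ℤ) := by push_cast; ring
    rw [dcoef_pred, h2, h3, neg_smul]
  rw [hL, hM, hC]
  abel

lemma tauF_sigma_one (F : ℤ → ℤ → M) (c : ℤ) (hF : PT c F) (p q : ℤ) :
    tauF (fun x y => F (x-1) y) p q = - tauF F (p-1) q := by
  set J : ℕ := (p - c).toNat + 1 with hJdef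
  have hJ1 : p - c < ((J:ℕ):ℤ) := by rw [hJdef]; push_cast; omega
  have hJ2 : (p-1) - c < ((J:ℕ):ℤ) := by rw [hJdef]; push_cast; omega
  have hPT : PT c (fun x y => F (x-1) y) := fun x y hx => hF _ _ (by omega)
  rw [tauF_eq _ c hPT p q hJ1, tauF_eq F c hF (p-1) q hJ2, ← Finset.sum_neg_distrib]
  refine Finset.sum_congr rfl fun j _ => ?_
  have h2 : (p-1) - (j:ℤ) = p - (j:ℤ) - 1 := by ring
  rw [dcoef_pred, h2, neg_smul, neg_neg]

lemma phiF_shift2 (F : ℤ → ℤ → M) (l : ℕ) (m n : ℤ) :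
    phiF (fun x y => F x (y - (l:ℤ))) m n = phiF F m (n - (l:ℤ)) := by
  unfold phiF
  refine finsum_congr fun i => ?_
  have h : n - (i:ℤ) - (l:ℤ) = n - (l:ℤ) - (i:ℤ) := by ring
  simp only [h]

lemma phiF_mulZW' (l : ℕ) (G : ℤ → ℤ → M) (N : ℤ) (hG : QT N G) (m n : ℤ) :
    phiF (mulZW' l G) m n = phiF G (m - (l:ℤ)) n := by
  induction l generalizing m with
  | zero => rw [mulZW'_zero]; norm_num
  | succ l ih =>
      rw [← mulZW'_comp, phiF_mulZW'_one _ N (QT_mulZW' N l G hG), ih]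
      have : m - 1 - (l:ℤ) = m - ((l+1:ℕ):ℤ) := by push_cast; ring
      rw [this]

lemma phiF_sigma (k : ℕ) (G : ℤ → ℤ → M) (N : ℤ) (hG : QT N G) (m n : ℤ) :
    phiF (fun p q => G (p - (k:ℤ)) q) m n
      = mulZmW' k (fun x y => phiF G x y) m n := by
  induction k generalizing m n with
  | zero =>
      rw [mulZmW'_zero]
      unfold phiF
      refine finsum_congr fun i => ?_
      norm_num
  | succ k ih =>
      have hstep : phiF (fun p q => G (p - ((k+1:ℕ):ℤ)) q) m n
          = phiF (fun p q => G (p - (k:ℤ)) q) (m-1) n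
            - phiF (fun p q => G (p - (k:ℤ)) q) m (n-1) := by
        have hQT : QT N (fun p q => G (p - (k:ℤ)) q) := fun p q hq => hG _ _ hq
        have := phiF_sigma_one (fun p q => G (p - (k:ℤ)) q) N hQT m n
        rw [← this]
        unfold phiF
        refine finsum_congr fun i => ?_
        have h : m + (i:ℤ) - 1 - (k:ℤ) = m + (i:ℤ) - ((k+1:ℕ):ℤ) := by push_cast; ring
        simp only [h]
      rw [hstep, ih, ih, mulZmW'_succ]

lemma tauF_mulZW' (l : ℕ) (F : ℤ → ℤ → M) (c : ℤ) (hF : PT c F) (p q : ℤ) :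
    tauF (mulZW' l F) p q = tauF F p (q - (l:ℤ)) := by
  induction l generalizing q with
  | zero => rw [mulZW'_zero]; norm_num
  | succ l ih =>
      rw [← mulZW'_comp, tauF_mulZW'_one _ c (PT_mulZW' c l F hF), ih]
      have : q - 1 - (l:ℤ) = q - ((l+1:ℕ):ℤ) := by push_cast; ring
      rw [this]

lemma tauF_sigma2 (l : ℕ) (F : ℤ → ℤ → M) (c : ℤ) (hF : PT c F) (p q : ℤ) :
    tauF (fun x y => F x (y - (l:ℤ))) p q = mulZW' l (fun x y => tauF F x y) p q := by
  induction l generalizing p q with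
  | zero =>
      rw [mulZW'_zero]
      unfold tauF
      refine finsum_congr fun j => ?_
      norm_num
  | succ l ih =>
      have hPT : PT c (fun x y => F x (y - (l:ℤ))) := fun x y hx => hF _ _ hx
      have hstep : tauF (fun x y => F x (y - ((l+1:ℕ):ℤ))) p q
          = tauF (fun x y => F x (y - (l:ℤ))) (p-1) q
            + tauF (fun x y => F x (y - (l:ℤ))) p (q-1) := by
        have := tauF_sigma2_one (fun x y => F x (y - (l:ℤ))) c hPT p q
        rw [← this]
        unfold tauF
        refine finsum_congr fun j => ?_
        have h : q + (j:ℤ) - 1 - (l:ℤ) = q + (j:ℤ) - ((l+1:ℕ):ℤ) := by push_cast; ring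
        simp only [h]
      rw [hstep, ih, ih, ← mulZW'_comp, mulZW'_one]

lemma tauF_sigma (k : ℕ) (F : ℤ → ℤ → M) (c : ℤ) (hF : PT c F) (p q : ℤ) :
    tauF (fun x y => F (x - (k:ℤ)) y) p q = ((-1:ℤ)^k) • tauF F (p - (k:ℤ)) q := by
  induction k generalizing p with
  | zero =>
      simp only [Nat.cast_zero, pow_zero, one_smul, sub_zero]
  | succ k ih =>
      have hPT : PT c (fun x y => F (x - (k:ℤ)) y) := fun x y hx => hF _ _ (by omega)
      have hstep : tauF (fun x y => F (x - ((k+1:ℕ):ℤ)) y) p q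
          = - tauF (fun x y => F (x - (k:ℤ)) y) (p-1) q := by
        have := tauF_sigma_one (fun x y => F (x - (k:ℤ)) y) c hPT p q
        rw [← this]
        unfold tauF
        refine finsum_congr fun j => ?_
        have h : p - (j:ℤ) - 1 - (k:ℤ) = p - (j:ℤ) - ((k+1:ℕ):ℤ) := by push_cast; ring
        simp only [h]
      rw [hstep, ih]
      have h2 : p - 1 - (k:ℤ) = p - ((k+1:ℕ):ℤ) := by push_cast; ring
      rw [h2, pow_succ]
      rw [← neg_smul]
      congr 1
      ring

lemma mulZW'_boost (l d : ℕ) (F G : ℤ → ℤ → M) (h : mulZW' l F = mulZW' l G) :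
    mulZW' (l+d) F = mulZW' (l+d) G := by
  induction d with
  | zero => exact h
  | succ d ih => rw [show l+(d+1) = (l+d)+1 from rfl, ← mulZW'_comp (l+d) F, ← mulZW'_comp (l+d) G, ih]

lemma rc_vandermonde (x y : ℤ) (s : ℕ) :
    ∑ i ∈ range (s+1), Ring.choose x i * Ring.choose y (s-i) = Ring.choose (x+y) s := by
  rw [Ring.add_choose_eq s (Commute.all x y), Finset.Nat.sum_antidiagonal_eq_sum_range_succ
    (fun i j => Ring.choose x i * Ring.choose y j)]

lemma rc_natCast (n k : ℕ) : Ring.choose ((n:ℤ)) k = (n.choose k : ℤ) :=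
  Ring.choose_natCast n k

lemma desc_smeval_prod (x : ℤ) (j : ℕ) :
    (descPochhammer ℤ j).smeval x = ∏ t ∈ range j, (x - t) := by
  induction j with
  | zero => simp [descPochhammer_zero]
  | succ j ih =>
      rw [descPochhammer_succ_right, Polynomial.smeval_mul, ih, prod_range_succ,
        Polynomial.smeval_sub]
      simp [Polynomial.smeval_natCast, Polynomial.smeval_X]

lemma rc_factorial (x : ℤ) (j : ℕ) :
    (j.factorial : ℤ) * Ring.choose x j = ∏ t ∈ range j, (x - t) := by
  rw [← desc_smeval_prod, Ring.descPochhammer_eq_factorial_smul_choose, nsmul_eq_mul]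

lemma rc_neg (x : ℤ) (j : ℕ) :
    Ring.choose x j = (-1:ℤ)^j * Ring.choose ((j:ℤ) - 1 - x) j := by
  have hfac : ((j.factorial : ℤ)) ≠ 0 := Int.natCast_ne_zero.mpr (Nat.factorial_ne_zero j)
  apply mul_left_cancel₀ hfac
  have h1 : (j.factorial : ℤ) * ((-1:ℤ)^j * Ring.choose ((j:ℤ) - 1 - x) j)
      = (-1:ℤ)^j * ((j.factorial : ℤ) * Ring.choose ((j:ℤ) - 1 - x) j) := by ring
  rw [h1, rc_factorial, rc_factorial]
  have h2 : ∀ t ∈ range j, ((j:ℤ) - 1 - x - t) = (-1) * (x - ((j - 1 - t : ℕ) : ℤ)) := by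
    intro t ht
    have ht' : t ≤ j - 1 := Nat.le_sub_one_of_lt (mem_range.mp ht)
    have hj : 1 ≤ j := Nat.one_le_iff_ne_zero.mpr (by rintro rfl; exact absurd (mem_range.mp ht) (by omega))
    have : ((j - 1 - t : ℕ) : ℤ) = (j:ℤ) - 1 - t := by
      push_cast [Nat.cast_sub ht', Nat.cast_sub hj]
      ring
    rw [this]; ring
  rw [Finset.prod_congr rfl h2, Finset.prod_mul_distrib, Finset.prod_const, card_range,
    Finset.prod_range_reflect (fun t => (x - (t:ℤ)))]
  ring_nf
  simp [mul_comm]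

lemma rc_nat_choose_big {n k : ℕ} (h : n < k) : Ring.choose ((n:ℤ)) k = 0 := by
  rw [rc_natCast, Nat.choose_eq_zero_of_lt h, Nat.cast_zero]

lemma rc_delta (m : ℤ) (s : ℕ) :
    ∑ i ∈ range (s+1), ((-1:ℤ)^i * Ring.choose (m+i) i) * Ring.choose (m+s) (s-i)
      = if s = 0 then 1 else 0 := by
  have h1 : ∀ i : ℕ, (-1:ℤ)^i * Ring.choose (m+i) i = Ring.choose (-1 - m) i := by
    intro i
    rw [rc_neg (m+i) i]
    have : ((i:ℤ) - 1 - (m + i)) = -1 - m := by ring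
    rw [this, ← mul_assoc, ← pow_add]
    simp [pow_mul]
  rw [Finset.sum_congr rfl (fun i _ => by rw [h1 i])]
  rw [rc_vandermonde]
  have h2 : (-1 - m + (m + s)) = ((s:ℤ) - 1) := by ring
  rw [h2]
  rcases Nat.eq_zero_or_pos s with hs | hs
  · subst hs; simp [Ring.choose_zero_right]
  · have : ((s:ℤ) - 1) = ((s - 1 : ℕ) : ℤ) := by omega
    rw [this, rc_nat_choose_big (by omega), if_neg (by omega)]

/-- expansion of `F(a,·)` at `z+w` (abstract version of `shiftComp`) -/
noncomputable def psiF (G : ℤ → ℤ → M) (p q : ℤ) : M :=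
  ∑ᶠ i : ℕ, (Ring.choose (p + (i:ℤ)) i) • G (p + (i:ℤ)) (q - (i:ℤ))

lemma QT_psiF (N : ℤ) (G : ℤ → ℤ → M) (hG : QT N G) : QT N (psiF G) := by
  intro p q hq
  unfold psiF
  have : ∀ i : ℕ, (Ring.choose (p + (i:ℤ)) i) • G (p + (i:ℤ)) (q - (i:ℤ)) = 0 := by
    intro i
    rw [hG _ _ (by omega : q - (i:ℤ) < N), smul_zero]
  simp only [this, finsum_zero]

lemma psiF_eq (G : ℤ → ℤ → M) (N : ℤ) (hG : QT N G) (p q : ℤ) {I : ℕ} (hI : q - N < I) :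
    psiF G p q = ∑ i ∈ range I, (Ring.choose (p + (i:ℤ)) i) • G (p + (i:ℤ)) (q - (i:ℤ)) := by
  apply fin2
  intro i hi
  rw [hG _ _ (by omega : q - (i:ℤ) < N), smul_zero]

lemma phiF_psiF (G : ℤ → ℤ → M) (N : ℤ) (hG : QT N G) (m n : ℤ) :
    phiF (psiF G) m n = G m n := by
  set I : ℕ := (n - N).toNat + 1 with hIdef
  have hIn : n - N < (I:ℤ) := by rw [hIdef]; push_cast; omega
  set T : ℕ → ℕ → M := fun i s =>
    if i ≤ s then (ccoef m i * Ring.choose (m + (s:ℤ)) (s-i)) • G (m + (s:ℤ)) (n - (s:ℤ)) else 0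
    with hTdef
  have hG0 : ∀ s : ℕ, I ≤ s → G (m + (s:ℤ)) (n - (s:ℤ)) = 0 := by
    intro s hs
    have hs' : (I:ℤ) ≤ (s:ℤ) := by exact_mod_cast hs
    exact hG _ _ (by omega)
  have step1 : phiF (psiF G) m n = ∑ i ∈ range I, ∑ s ∈ range (2*I), T i s := by
    rw [phiF_eq (psiF G) N (QT_psiF N G hG) m n hIn]
    refine Finset.sum_congr rfl fun i hi => ?_
    have hiI : i < I := mem_range.mp hi
    rw [psiF_eq G N hG _ _ (show (n - (i:ℤ)) - N < ((I:ℕ):ℤ) by push_cast; omega)]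
    rw [Finset.smul_sum]
    have hL : ∑ j ∈ range I, ccoef m i • ((Ring.choose ((m+(i:ℤ)) + (j:ℤ)) j) • G ((m+(i:ℤ)) + (j:ℤ)) ((n-(i:ℤ)) - (j:ℤ)))
        = ∑ j ∈ range I, T i (i + j) := by
      refine Finset.sum_congr rfl fun j hj => ?_
      simp only [hTdef, if_pos (Nat.le_add_right i j)]
      have h1 : m + (i:ℤ) + (j:ℤ) = m + ((i+j:ℕ):ℤ) := by push_cast; ring
      have h2 : n - (i:ℤ) - (j:ℤ) = n - ((i+j:ℕ):ℤ) := by push_cast; ring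
      have h3 : (i+j) - i = j := by omega
      rw [h1, h2, h3, smul_smul]
    rw [hL]
    have h4 : ∑ j ∈ range I, T i (i + j) = ∑ s ∈ Finset.Ico i (i+I), T i s := by
      rw [Finset.sum_Ico_eq_sum_range]
      simp only [Nat.add_sub_cancel_left]
    rw [h4]
    apply Finset.sum_subset
    · intro s hs
      simp only [Finset.mem_Ico] at hs
      exact mem_range.mpr (by omega)
    · intro s hs hns
      simp only [Finset.mem_Ico] at hns
      simp only [hTdef]
      rcases Nat.lt_or_ge s i with h | h
      · rw [if_neg (by omega : ¬ i ≤ s)]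
      · rw [if_pos h, hG0 s (by omega), smul_zero]
  have step2 : ∑ i ∈ range I, ∑ s ∈ range (2*I), T i s
      = ∑ s ∈ range (2*I), ∑ i ∈ range I, T i s := Finset.sum_comm
  have step3 : ∀ s ∈ range (2*I), ∑ i ∈ range I, T i s
      = (if s = 0 then (1:ℤ) else 0) • G (m + (s:ℤ)) (n - (s:ℤ)) := by
    intro s hs
    rcases Nat.lt_or_ge s I with hsI | hsI
    · have hsub : ∑ i ∈ range I, T i s = ∑ i ∈ range (s+1), T i s := by
        symm
        apply Finset.sum_subset
        · intro i hi
          have := mem_range.mp hi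
          exact mem_range.mpr (by omega)
        · intro i _ hni
          have hni' : ¬ i ≤ s := by
            simp only [mem_range] at hni; omega
          simp only [hTdef]
          rw [if_neg hni']
      have hsum : ∑ i ∈ range (s+1), T i s
          = (∑ i ∈ range (s+1), (ccoef m i * Ring.choose (m + (s:ℤ)) (s-i))) • G (m + (s:ℤ)) (n - (s:ℤ)) := by
        rw [Finset.sum_smul]
        refine Finset.sum_congr rfl fun i hi => ?_
        simp only [hTdef]
        rw [if_pos (Nat.lt_succ_iff.mp (mem_range.mp hi))]
      rw [hsub, hsum]
      congr 1
      simpa [ccoef] using rc_delta m s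
    · have hz : G (m + (s:ℤ)) (n - (s:ℤ)) = 0 := hG0 s hsI
      rw [hz, smul_zero]
      refine Finset.sum_eq_zero fun i hi => ?_
      simp only [hTdef]
      by_cases h : i ≤ s
      · rw [if_pos h, hz, smul_zero]
      · rw [if_neg h]
  rw [step1, step2, Finset.sum_congr rfl step3]
  have h2I : 0 < 2*I := by omega
  rw [Finset.sum_eq_single_of_mem 0 (mem_range.mpr h2I)
    (fun b _ hb => by rw [if_neg hb, zero_smul])]
  simp

def icoZ (x p : ℤ) : ℤ :=
  if x ≤ p ∧ 0 ≤ p then ((p - x).negOnePow : ℤ) * Ring.choose p ((p - x).toNat) else 0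

def tcoZ (S q p : ℤ) : ℤ :=
  if p ≤ q ∧ 0 ≤ p then ((p.negOnePow : ℤ)) * Ring.choose (S - p) ((q - p).toNat) else 0

def embAdd (x : ℤ) : ℕ ↪ ℤ := ⟨fun i => x + (i:ℤ), by intro a b hab; simp at hab; omega⟩
def embSub (q : ℤ) : ℕ ↪ ℤ := ⟨fun j => q - (j:ℤ), by intro a b hab; simp at hab; omega⟩
def embNat : ℕ ↪ ℤ := ⟨fun p => (p:ℤ), by intro a b hab; simp at hab; omega⟩
lemma embAdd_apply (x : ℤ) (i : ℕ) : embAdd x i = x + (i:ℤ) := rfl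
lemma embSub_apply (q : ℤ) (j : ℕ) : embSub q j = q - (j:ℤ) := rfl
lemma embNat_apply (p : ℕ) : embNat p = (p:ℤ) := rfl

lemma sum_move {A B : Finset ℤ} (F : ℤ → M) (hA : ∀ p ∈ B, p ∉ A → F p = 0)
    (hB : ∀ p ∈ A, p ∉ B → F p = 0) : ∑ p ∈ A, F p = ∑ p ∈ B, F p := by
  have h1 : ∑ p ∈ A, F p = ∑ p ∈ A ∪ B, F p :=
    Finset.sum_subset Finset.subset_union_left (fun p hp hnp => by
      rcases Finset.mem_union.mp hp with h | h
      · exact absurd h hnp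
      · exact hA p h hnp)
  have h2 : ∑ p ∈ B, F p = ∑ p ∈ A ∪ B, F p :=
    Finset.sum_subset Finset.subset_union_right (fun p hp hnp => by
      rcases Finset.mem_union.mp hp with h | h
      · exact hB p h hnp
      · exact absurd h hnp)
  rw [h1, h2]

lemma prune_shift (g : ℕ → M) (a L R : ℕ) (hlow : ∀ r, r < a → g r = 0)
    (hhigh : ∀ r, a + L < r → g r = 0) (hR : a + L + 1 ≤ R) :
    ∑ r ∈ range R, g r = ∑ j ∈ range (L+1), g (a + j) := by
  have h1 : ∑ r ∈ Finset.Ico a (a+L+1), g r = ∑ r ∈ range R, g r := by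
    apply Finset.sum_subset
    · intro r hr
      simp only [Finset.mem_Ico] at hr
      exact mem_range.mpr (by omega)
    · intro r _ hnr
      simp only [Finset.mem_Ico] at hnr
      rcases Nat.lt_or_ge r a with h | h
      · exact hlow r h
      · exact hhigh r (by omega)
  rw [← h1, Finset.sum_Ico_eq_sum_range]
  have h2 : a + L + 1 - a = L + 1 := by omega
  rw [h2]

lemma swap_smul (A B : Finset ℕ) (lam : ℕ → ℤ) (c : ℕ → ℕ → ℤ) (f : ℕ → M) :
    ∑ r ∈ A, lam r • ∑ p ∈ B, c r p • f p = ∑ p ∈ B, (∑ r ∈ A, lam r * c r p) • f p := by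
  simp_rw [Finset.smul_sum, smul_smul]
  rw [Finset.sum_comm]
  simp_rw [Finset.sum_smul]

lemma Esum (f : ℤ → M) (B : ℕ) (flow : ∀ p : ℤ, p < 0 → f p = 0)
    (fhigh : ∀ p : ℤ, (B:ℤ) < p → f p = 0) (x : ℤ) :
    ∑ᶠ i : ℕ, ccoef x i • f (x + (i:ℤ))
      = ∑ p ∈ range (B+1), icoZ x ((p:ℕ):ℤ) • f ((p:ℕ):ℤ) := by
  set J : ℕ := (B + 1 - x).toNat with hJdef
  have hJB : (B:ℤ) + 1 - x ≤ (J:ℤ) := by rw [hJdef]; exact Int.self_le_toNat _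
  have hJ : ∀ i : ℕ, J ≤ i → ccoef x i • f (x + (i:ℤ)) = 0 := by
    intro i hi
    have : (J:ℤ) ≤ (i:ℤ) := by exact_mod_cast hi
    rw [fhigh _ (by omega), smul_zero]
  rw [fin2 _ J hJ]
  have hterm : ∀ i ∈ range J, ccoef x i • f (x + (i:ℤ)) = icoZ x (x + (i:ℤ)) • f (x + (i:ℤ)) := by
    intro i _
    rcases lt_or_ge (x + (i:ℤ)) 0 with h | h
    · rw [flow _ h, smul_zero, smul_zero]
    · unfold icoZ ccoef
      rw [if_pos ⟨by omega, h⟩]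
      have h1 : x + (i:ℤ) - x = (i:ℤ) := by ring
      have h2 : (((i:ℤ)).negOnePow : ℤ) = (-1:ℤ)^i := Int.coe_negOnePow_natCast i
      rw [h1, h2, Int.toNat_natCast]
  rw [Finset.sum_congr rfl hterm]
  have hmap : ∑ i ∈ range J, icoZ x (x + (i:ℤ)) • f (x + (i:ℤ))
      = ∑ p ∈ (range J).map (embAdd x), icoZ x p • f p := by
    rw [Finset.sum_map]; rfl
  have hmap2 : ∑ p ∈ range (B+1), icoZ x ((p:ℕ):ℤ) • f ((p:ℕ):ℤ)
      = ∑ p ∈ (range (B+1)).map embNat, icoZ x p • f p := by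
    rw [Finset.sum_map]; rfl
  rw [hmap, hmap2]
  apply sum_move
  · intro p hp hnp
    simp only [Finset.mem_map, Finset.mem_range, embNat_apply, embAdd_apply] at hp hnp
    obtain ⟨p₀, hp₀, rfl⟩ := hp
    push_neg at hnp
    rcases lt_or_ge ((p₀:ℕ):ℤ) x with h | h
    · unfold icoZ
      rw [if_neg (by omega), zero_smul]
    · have hex : ∃ i : ℕ, x + (i:ℤ) = ((p₀:ℕ):ℤ) := ⟨((p₀:ℤ) - x).toNat, by omega⟩
      obtain ⟨i, hi⟩ := hex
      have hiJ : ¬ i < J := fun hc => (hnp i hc) hi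
      have hiJ' : (J:ℤ) ≤ (i:ℤ) := by exact_mod_cast Nat.le_of_not_lt hiJ
      rw [fhigh _ (by omega), smul_zero]
  · intro p hp hnp
    simp only [Finset.mem_map, Finset.mem_range, embNat_apply, embAdd_apply] at hp hnp
    obtain ⟨i, hiJ, rfl⟩ := hp
    push_neg at hnp
    rcases lt_or_ge (x + (i:ℤ)) 0 with h | h
    · rw [flow _ h, smul_zero]
    · have hex : ∃ p₀ : ℕ, ((p₀:ℕ):ℤ) = x + (i:ℤ) := ⟨(x + (i:ℤ)).toNat, by omega⟩
      obtain ⟨p₀, hp₀⟩ := hex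
      have hB' : ¬ p₀ < B + 1 := fun hc => (hnp p₀ hc) hp₀
      have hB'' : ((B:ℕ):ℤ) + 1 ≤ (p₀:ℤ) := by exact_mod_cast Nat.le_of_not_lt hB'
      rw [fhigh _ (by omega), smul_zero]

lemma Tsum (f : ℤ → M) (B : ℕ) (flow : ∀ p : ℤ, p < 0 → f p = 0)
    (fhigh : ∀ p : ℤ, (B:ℤ) < p → f p = 0) (S q : ℤ) :
    ∑ᶠ j : ℕ, dcoef q (S - q) j • f (q - (j:ℤ))
      = ∑ p ∈ range (B+1), tcoZ S q ((p:ℕ):ℤ) • f ((p:ℕ):ℤ) := by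
  set J : ℕ := (q + 1).toNat with hJdef
  have hJq : q + 1 ≤ (J:ℤ) := by rw [hJdef]; exact Int.self_le_toNat _
  have hJ : ∀ j : ℕ, J ≤ j → dcoef q (S - q) j • f (q - (j:ℤ)) = 0 := by
    intro j hj
    have : (J:ℤ) ≤ (j:ℤ) := by exact_mod_cast hj
    rw [flow _ (by omega), smul_zero]
  rw [fin2 _ J hJ]
  have hterm : ∀ j ∈ range J, dcoef q (S - q) j • f (q - (j:ℤ)) = tcoZ S q (q - (j:ℤ)) • f (q - (j:ℤ)) := by
    intro j _
    rcases lt_or_ge (q - (j:ℤ)) 0 with h | h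
    · rw [flow _ h, smul_zero, smul_zero]
    · unfold tcoZ dcoef
      rw [if_pos ⟨by omega, h⟩]
      have h1 : S - (q - (j:ℤ)) = S - q + (j:ℤ) := by ring
      have h2 : (q - (q - (j:ℤ))).toNat = j := by omega
      rw [h1, h2]
  rw [Finset.sum_congr rfl hterm]
  have hmap : ∑ j ∈ range J, tcoZ S q (q - (j:ℤ)) • f (q - (j:ℤ))
      = ∑ p ∈ (range J).map (embSub q), tcoZ S q p • f p := by
    rw [Finset.sum_map]; rfl
  have hmap2 : ∑ p ∈ range (B+1), tcoZ S q ((p:ℕ):ℤ) • f ((p:ℕ):ℤ)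
      = ∑ p ∈ (range (B+1)).map embNat, tcoZ S q p • f p := by
    rw [Finset.sum_map]; rfl
  rw [hmap, hmap2]
  apply sum_move
  · intro p hp hnp
    simp only [Finset.mem_map, Finset.mem_range, embNat_apply, embSub_apply] at hp hnp
    obtain ⟨p₀, hp₀, rfl⟩ := hp
    push_neg at hnp
    rcases lt_or_ge q ((p₀:ℕ):ℤ) with h | h
    · unfold tcoZ
      rw [if_neg (by omega), zero_smul]
    · have hex : ∃ j : ℕ, q - (j:ℤ) = ((p₀:ℕ):ℤ) := ⟨(q - (p₀:ℤ)).toNat, by omega⟩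
      obtain ⟨j, hj⟩ := hex
      have hjJ : ¬ j < J := fun hc => (hnp j hc) hj
      have hjJ' : (J:ℤ) ≤ (j:ℤ) := by exact_mod_cast Nat.le_of_not_lt hjJ
      exfalso
      omega
  · intro p hp hnp
    simp only [Finset.mem_map, Finset.mem_range, embNat_apply, embSub_apply] at hp hnp
    obtain ⟨j, hjJ, rfl⟩ := hp
    push_neg at hnp
    rcases lt_or_ge (q - (j:ℤ)) 0 with h | h
    · rw [flow _ h, smul_zero]
    · have hex : ∃ p₀ : ℕ, ((p₀:ℕ):ℤ) = q - (j:ℤ) := ⟨(q - (j:ℤ)).toNat, by omega⟩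
      obtain ⟨p₀, hp₀⟩ := hex
      have hB' : ¬ p₀ < B + 1 := fun hc => (hnp p₀ hc) hp₀
      have hB'' : ((B:ℕ):ℤ) + 1 ≤ (p₀:ℤ) := by exact_mod_cast Nat.le_of_not_lt hB'
      rw [fhigh _ (by omega), smul_zero]

lemma rc_nat_vandermonde (D : ℕ) (x : ℤ) (w : ℕ) :
    Ring.choose (x + (D:ℤ)) w = ∑ j ∈ range (w+1), (D.choose j : ℤ) * Ring.choose x (w-j) := by
  rw [← rc_vandermonde x (D:ℤ) w]
  rw [← Finset.sum_range_reflect (fun j => (D.choose j : ℤ) * Ring.choose x (w-j)) (w+1)]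
  refine Finset.sum_congr rfl ?_
  intro i hi
  have hiw : i ≤ w := Nat.lt_succ_iff.mp (mem_range.mp hi)
  have h1 : w + 1 - 1 - i = w - i := by omega
  have h2 : w - (w - i) = i := by omega
  rw [h1, h2, rc_natCast, mul_comm]

lemma nat_alt (D : ℕ) : ∀ (q w : ℕ),
    ∑ j ∈ range (D+1), (-1:ℤ)^j * (D.choose j : ℤ) * ((q+j).choose w : ℤ)
      = (-1:ℤ)^D * (if D ≤ w then ((q.choose (w-D) : ℕ) : ℤ) else 0) := by
  induction D with
  | zero => intro q w; simp
  | succ D ih =>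
      intro q w
      have key : ∑ j ∈ range (D+2), (-1:ℤ)^j * ((D+1).choose j : ℤ) * ((q+j).choose w : ℤ)
          = (∑ j ∈ range (D+1), (-1:ℤ)^j * (D.choose j : ℤ) * ((q+j).choose w : ℤ))
            - ∑ j ∈ range (D+1), (-1:ℤ)^j * (D.choose j : ℤ) * (((q+1)+j).choose w : ℤ) := by
        rw [Finset.sum_range_succ' (fun j => (-1:ℤ)^j * ((D+1).choose j : ℤ) * ((q+j).choose w : ℤ)) (D+1)]
        have hsplit : ∀ j ∈ range (D+1),
            (-1:ℤ)^(j+1) * ((D+1).choose (j+1) : ℤ) * ((q+(j+1)).choose w : ℤ)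
            = -((-1:ℤ)^j * (D.choose j : ℤ) * (((q+1)+j).choose w : ℤ))
              - (-1:ℤ)^j * (D.choose (j+1) : ℤ) * (((q+1)+j).choose w : ℤ) := by
          intro j hj
          have hq : (q+(j+1)) = (q+1)+j := by omega
          rw [hq, Nat.choose_succ_succ]
          push_cast
          ring
        rw [Finset.sum_congr rfl hsplit, Finset.sum_sub_distrib, Finset.sum_neg_distrib]
        have hT : ∑ j ∈ range (D+1), (-1:ℤ)^j * (D.choose (j+1) : ℤ) * (((q+1)+j).choose w : ℤ)
            = ∑ j ∈ range D, (-1:ℤ)^j * (D.choose (j+1) : ℤ) * (((q+1)+j).choose w : ℤ) := by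
          rw [Finset.sum_range_succ, Nat.choose_succ_self]
          simp
        have hL : ∑ j ∈ range (D+1), (-1:ℤ)^j * (D.choose j : ℤ) * ((q+j).choose w : ℤ)
            = ((q.choose w : ℕ) : ℤ)
              - ∑ j ∈ range D, (-1:ℤ)^j * (D.choose (j+1) : ℤ) * (((q+1)+j).choose w : ℤ) := by
          rw [Finset.sum_range_succ' (fun j => (-1:ℤ)^j * (D.choose j : ℤ) * ((q+j).choose w : ℤ)) D]
          have hs2 : ∀ j ∈ range D, (-1:ℤ)^(j+1) * (D.choose (j+1) : ℤ) * ((q+(j+1)).choose w : ℤ)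
              = -((-1:ℤ)^j * (D.choose (j+1) : ℤ) * (((q+1)+j).choose w : ℤ)) := by
            intro j hj
            have hq : (q+(j+1)) = (q+1)+j := by omega
            rw [hq]; ring
          rw [Finset.sum_congr rfl hs2, Finset.sum_neg_distrib]
          simp only [pow_zero, Nat.choose_zero_right, Nat.cast_one, one_mul, add_zero,
            Nat.add_zero]
          ring
        rw [hT, hL]
        simp only [pow_zero, Nat.choose_zero_right, Nat.cast_one, one_mul, add_zero,
          Nat.add_zero]
        ring
      rw [key, ih q w, ih (q+1) w]
      by_cases hw : D + 1 ≤ w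
      · have hw' : D ≤ w := by omega
        rw [if_pos hw', if_pos hw', if_pos hw]
        have hc : w - D = (w - (D+1)) + 1 := by omega
        rw [hc, Nat.choose_succ_succ]
        push_cast
        ring
      · by_cases hw2 : D ≤ w
        · have : w = D := by omega
          subst this
          rw [if_pos hw2, if_pos hw2, if_neg hw]
          simp
        · rw [if_neg hw2, if_neg hw2, if_neg hw]
          ring

lemma negOnePow_cast_pow (a : ℕ) : (((a:ℕ):ℤ).negOnePow : ℤ) = (-1:ℤ)^a :=
  Int.coe_negOnePow_natCast a

/-- sign comparison helper: if `x ≡ a (mod 2)` then `x.negOnePow = (-1)^a`. -/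
lemma negOnePow_eq_pow_of_sub_even (x : ℤ) (a : ℕ) (hpar : ∃ y : ℤ, x = ((a:ℕ):ℤ) + 2 * y) :
    ((x.negOnePow : ℤˣ) : ℤ) = (-1:ℤ)^a := by
  obtain ⟨y, rfl⟩ := hpar
  rw [Int.negOnePow_add, Int.negOnePow_two_mul]
  simp [Int.coe_negOnePow_natCast]

lemma Kco (n : ℤ) (D w : ℕ) (hw : (w:ℤ) = n + (D:ℤ)) (q : ℕ) :
    ∑ j ∈ range (D+1), ((-1:ℤ)^((j+q)+w) * (((j+q).choose w : ℕ):ℤ)) * ((D.choose j : ℕ):ℤ)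
      = icoZ n ((q:ℕ):ℤ) := by
  have h1 : ∀ j ∈ range (D+1), ((-1:ℤ)^((j+q)+w) * (((j+q).choose w : ℕ):ℤ)) * ((D.choose j:ℕ):ℤ)
      = ((-1:ℤ)^(q+w)) * ((-1:ℤ)^j * ((D.choose j:ℕ):ℤ) * (((q+j).choose w : ℕ):ℤ)) := by
    intro j _
    have hqj : j+q = q+j := by omega
    rw [hqj, pow_add, pow_add, pow_add]
    ring
  rw [Finset.sum_congr rfl h1, ← Finset.mul_sum, nat_alt D q w]
  by_cases hn : 0 ≤ n
  · have hDw : D ≤ w := by omega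
    rw [if_pos hDw]
    unfold icoZ
    by_cases hq : n ≤ ((q:ℕ):ℤ)
    · rw [if_pos ⟨hq, by positivity⟩]
      have h2 : (((q:ℕ):ℤ) - n).toNat = q - n.toNat := by omega
      have h3 : w - D = n.toNat := by omega
      rw [h2, h3, rc_natCast, Nat.choose_symm (by omega : n.toNat ≤ q)]
      have hsign : ((((q:ℕ):ℤ) - n).negOnePow : ℤ) = (-1:ℤ)^(q+w+D) := by
        apply negOnePow_eq_pow_of_sub_even
        exact ⟨-(n + D), by push_cast; omega⟩
      rw [hsign, pow_add]
      ring
    · rw [if_neg (by tauto)]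
      have h4 : w - D = n.toNat := by omega
      rw [h4, Nat.choose_eq_zero_of_lt (by omega : q < n.toNat)]
      simp
  · rw [if_neg (by omega : ¬ D ≤ w)]
    unfold icoZ
    rw [if_pos ⟨by omega, by positivity⟩]
    rw [rc_nat_choose_big (show q < (((q:ℕ):ℤ) - n).toNat by omega)]
    simp

lemma KcoB (m n S : ℤ) (hmn : m + n = S) (D w E p : ℕ)
    (hw : (w:ℤ) = n + (D:ℤ)) (hE : (E:ℤ) = S - (p:ℤ) + (D:ℤ)) :
    ∑ j ∈ range (E+1), ((-1:ℤ)^((p+j)+w) * (((p+j).choose w : ℕ):ℤ)) * ((-1:ℤ)^p * ((E.choose j : ℕ):ℤ))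
      = icoZ m ((p:ℕ):ℤ) := by
  have hp2 : (-1:ℤ)^p * (-1:ℤ)^p = 1 := by
    rw [← pow_add, ← two_mul, pow_mul]
    norm_num
  have h1 : ∀ j ∈ range (E+1), ((-1:ℤ)^((p+j)+w) * (((p+j).choose w : ℕ):ℤ)) * ((-1:ℤ)^p * ((E.choose j:ℕ):ℤ))
      = ((-1:ℤ)^w) * ((-1:ℤ)^j * ((E.choose j:ℕ):ℤ) * (((p+j).choose w : ℕ):ℤ)) := by
    intro j _
    rw [pow_add, pow_add]
    linear_combination (((p + j).choose w : ℤ) * (E.choose j : ℤ) * (-1:ℤ)^j * (-1:ℤ)^w) * hp2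
  rw [Finset.sum_congr rfl h1, ← Finset.mul_sum, nat_alt E p w]
  by_cases hm : m ≤ (p:ℤ)
  · have hEw : E ≤ w := by omega
    rw [if_pos hEw]
    unfold icoZ
    rw [if_pos ⟨hm, by positivity⟩]
    have h2 : (((p:ℕ):ℤ) - m).toNat = w - E := by omega
    rw [h2, rc_natCast]
    have hsign : ((((p:ℕ):ℤ) - m).negOnePow : ℤ) = (-1:ℤ)^(w+E) := by
      apply negOnePow_eq_pow_of_sub_even
      exact ⟨(p:ℤ) - (S + D), by push_cast; omega⟩
    rw [hsign, pow_add]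
    ring
  · have hEw : ¬ E ≤ w := by omega
    rw [if_neg hEw]
    unfold icoZ
    rw [if_neg (by tauto)]
    simp

lemma KcoV (S : ℤ) (D : ℕ) (r p : ℕ) :
    ∑ j ∈ range (D+1), ((D.choose j : ℕ):ℤ) * tcoZ S ((r:ℤ)-(j:ℤ)) ((p:ℕ):ℤ)
      = if p ≤ r then (-1:ℤ)^p * Ring.choose (S - (p:ℤ) + (D:ℤ)) (r - p) else 0 := by
  by_cases hpr : p ≤ r
  · rw [if_pos hpr]
    have hterm : ∀ j ∈ range (D+1), ((D.choose j:ℕ):ℤ) * tcoZ S ((r:ℤ)-(j:ℤ)) ((p:ℕ):ℤ)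
        = (-1:ℤ)^p * (if j ≤ r - p then ((D.choose j:ℕ):ℤ) * Ring.choose (S - (p:ℤ)) ((r-p)-j) else 0) := by
      intro j _
      unfold tcoZ
      by_cases hj : j ≤ r - p
      · rw [if_pos (by constructor <;> omega : ((p:ℕ):ℤ) ≤ (r:ℤ)-(j:ℤ) ∧ 0 ≤ ((p:ℕ):ℤ)), if_pos hj]
        have h1 : (((r:ℤ)-(j:ℤ)) - ((p:ℕ):ℤ)).toNat = (r-p)-j := by omega
        rw [h1, negOnePow_cast_pow]
        ring
      · rw [if_neg (by omega : ¬(((p:ℕ):ℤ) ≤ (r:ℤ)-(j:ℤ) ∧ 0 ≤ ((p:ℕ):ℤ))), if_neg hj, mul_zero, mul_zero]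
    rw [Finset.sum_congr rfl hterm, ← Finset.mul_sum]
    have hbig1 : ∑ j ∈ range (D+1), (if j ≤ r-p then ((D.choose j:ℕ):ℤ) * Ring.choose (S - (p:ℤ)) ((r-p)-j) else 0)
        = ∑ j ∈ range (D+(r-p)+1), (if j ≤ r-p then ((D.choose j:ℕ):ℤ) * Ring.choose (S - (p:ℤ)) ((r-p)-j) else 0) := by
      apply Finset.sum_subset
      · intro j hj; exact mem_range.mpr (by have := mem_range.mp hj; omega)
      · intro j _ hnj
        simp only [mem_range] at hnj
        have hjD : D < j := by omega
        by_cases hj : j ≤ r - p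
        · rw [if_pos hj, Nat.choose_eq_zero_of_lt hjD]
          simp
        · rw [if_neg hj]
    have hbig2 : ∑ j ∈ range ((r-p)+1), (if j ≤ r-p then ((D.choose j:ℕ):ℤ) * Ring.choose (S - (p:ℤ)) ((r-p)-j) else 0)
        = ∑ j ∈ range (D+(r-p)+1), (if j ≤ r-p then ((D.choose j:ℕ):ℤ) * Ring.choose (S - (p:ℤ)) ((r-p)-j) else 0) := by
      apply Finset.sum_subset
      · intro j hj; exact mem_range.mpr (by have := mem_range.mp hj; omega)
      · intro j _ hnj
        simp only [mem_range] at hnj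
        rw [if_neg (by omega)]
    have hbig3 : ∑ j ∈ range ((r-p)+1), (if j ≤ r-p then ((D.choose j:ℕ):ℤ) * Ring.choose (S - (p:ℤ)) ((r-p)-j) else 0)
        = ∑ j ∈ range ((r-p)+1), ((D.choose j:ℕ):ℤ) * Ring.choose (S - (p:ℤ)) ((r-p)-j) :=
      Finset.sum_congr rfl (fun j hj => if_pos (by have := mem_range.mp hj; omega))
    rw [hbig1, ← hbig2, hbig3, ← rc_nat_vandermonde]
  · rw [if_neg hpr]
    refine Finset.sum_eq_zero fun j _ => ?_
    unfold tcoZ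
    rw [if_neg (by omega : ¬(((p:ℕ):ℤ) ≤ (r:ℤ)-(j:ℤ) ∧ 0 ≤ ((p:ℕ):ℤ))), mul_zero]

lemma key (S : ℤ) (h t : ℤ → M) (P Q : ℕ)
    (hlow : ∀ p : ℤ, p < 0 → h p = 0)
    (hhigh : ∀ p : ℤ, (P:ℤ) < p → h p = 0)
    (ht : ∀ q : ℤ, t q = ∑ᶠ j : ℕ, dcoef q (S - q) j • h (q - (j:ℤ)))
    (htQ : ∀ q : ℤ, (Q:ℤ) < q → t q = 0)
    (m n : ℤ) (hmn : m + n = S) :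
    (∑ᶠ i : ℕ, ccoef m i • h (m + (i:ℤ))) = ∑ᶠ i : ℕ, ccoef n i • t (n + (i:ℤ)) := by
  have tlow : ∀ q : ℤ, q < 0 → t q = 0 := by
    intro q hq
    rw [ht q]
    have hz : ∀ j : ℕ, dcoef q (S - q) j • h (q - (j:ℤ)) = 0 := fun j => by
      rw [hlow _ (by omega), smul_zero]
    simp only [hz, finsum_zero]
  set D : ℕ := (max (-n) ((P:ℤ) - S)).toNat with hDdef
  have hD1 : -n ≤ (D:ℤ) := le_trans (le_max_left _ _) (Int.self_le_toNat _)
  have hD2 : (P:ℤ) - S ≤ (D:ℤ) := le_trans (le_max_right _ _) (Int.self_le_toNat _)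
  set w : ℕ := (n + (D:ℤ)).toNat with hwdef
  have hw : (w:ℤ) = n + (D:ℤ) := Int.toNat_of_nonneg (by omega)
  set R₀ : ℕ := Q + D + P + S.toNat + 2 with hR₀def
  have hSnn : (S:ℤ) ≤ (S.toNat : ℤ) := Int.self_le_toNat _
  set lam : ℕ → ℤ := fun r => (-1:ℤ)^(r+w) * (r.choose w : ℤ) with hlam
  set u : ℕ → M := fun r => ∑ j ∈ range (D+1), ((D.choose j : ℕ):ℤ) • t ((r:ℤ) - (j:ℤ)) with hu
  rw [Esum h P hlow hhigh m, Esum t Q tlow htQ n]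
  -- K2a
  have K2a : ∑ r ∈ range R₀, lam r • u r = ∑ q ∈ range (Q+1), icoZ n ((q:ℕ):ℤ) • t ((q:ℕ):ℤ) := by
    have h1 : ∑ r ∈ range R₀, lam r • u r
        = ∑ j ∈ range (D+1), ∑ r ∈ range R₀, (lam r * ((D.choose j:ℕ):ℤ)) • t ((r:ℤ) - (j:ℤ)) := by
      rw [Finset.sum_comm]
      refine Finset.sum_congr rfl fun r _ => ?_
      rw [hu, Finset.smul_sum]
      refine Finset.sum_congr rfl fun j _ => ?_
      rw [smul_smul]
    rw [h1]
    have h2 : ∀ j ∈ range (D+1), ∑ r ∈ range R₀, (lam r * ((D.choose j:ℕ):ℤ)) • t ((r:ℤ) - (j:ℤ))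
        = ∑ q ∈ range (Q+1), (lam (j+q) * ((D.choose j:ℕ):ℤ)) • t ((q:ℕ):ℤ) := by
      intro j hj
      have hjD : j ≤ D := Nat.lt_succ_iff.mp (mem_range.mp hj)
      have hps := prune_shift (fun r => (lam r * ((D.choose j:ℕ):ℤ)) • t ((r:ℤ) - (j:ℤ))) j Q R₀
        (fun r hr => by beta_reduce; rw [tlow _ (by omega : (r:ℤ) - (j:ℤ) < 0), smul_zero])
        (fun r hr => by
          beta_reduce
          have : (Q:ℤ) < (r:ℤ) - (j:ℤ) := by omega
          rw [htQ _ this, smul_zero])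
        (by omega)
      beta_reduce at hps
      rw [hps]
      refine Finset.sum_congr rfl fun q _ => ?_
      have harg : ((j+q:ℕ):ℤ) - (j:ℤ) = ((q:ℕ):ℤ) := by push_cast; ring
      rw [harg]
    rw [Finset.sum_congr rfl h2, Finset.sum_comm]
    refine Finset.sum_congr rfl fun q _ => ?_
    rw [← Finset.sum_smul]
    congr 1
    exact Kco n D w hw q
  -- K1
  have K1 : ∀ r : ℕ, u r = ∑ p ∈ range (P+1),
      (if p ≤ r then (-1:ℤ)^p * Ring.choose (S - (p:ℤ) + (D:ℤ)) (r - p) else 0) • h ((p:ℕ):ℤ) := by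
    intro r
    rw [hu]
    beta_reduce
    have h3 : ∀ j ∈ range (D+1), ((D.choose j:ℕ):ℤ) • t ((r:ℤ) - (j:ℤ))
        = ∑ p ∈ range (P+1), (((D.choose j:ℕ):ℤ) * tcoZ S ((r:ℤ)-(j:ℤ)) ((p:ℕ):ℤ)) • h ((p:ℕ):ℤ) := by
      intro j _
      rw [ht ((r:ℤ) - (j:ℤ)), Tsum h P hlow hhigh S ((r:ℤ)-(j:ℤ)), Finset.smul_sum]
      refine Finset.sum_congr rfl fun p _ => ?_
      rw [smul_smul]
    rw [Finset.sum_congr rfl h3, Finset.sum_comm]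
    refine Finset.sum_congr rfl fun p _ => ?_
    rw [← Finset.sum_smul]
    congr 1
    exact KcoV S D r p
  -- K2b
  have K2b : ∑ r ∈ range R₀, lam r • u r = ∑ p ∈ range (P+1), icoZ m ((p:ℕ):ℤ) • h ((p:ℕ):ℤ) := by
    have h4 : ∑ r ∈ range R₀, lam r • u r
        = ∑ p ∈ range (P+1), (∑ r ∈ range R₀,
            lam r * (if p ≤ r then (-1:ℤ)^p * Ring.choose (S - (p:ℤ) + (D:ℤ)) (r - p) else 0)) • h ((p:ℕ):ℤ) := by
      rw [Finset.sum_congr rfl (fun r _ => by rw [K1 r])]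
      exact swap_smul (range R₀) (range (P+1)) lam _ _
    rw [h4]
    refine Finset.sum_congr rfl fun p hp => ?_
    have hpP : p ≤ P := Nat.lt_succ_iff.mp (mem_range.mp hp)
    congr 1
    set E : ℕ := (S - (p:ℤ) + (D:ℤ)).toNat with hEdef
    have hE : (E:ℤ) = S - (p:ℤ) + (D:ℤ) := Int.toNat_of_nonneg (by omega)
    have hcast : ∀ r : ℕ, p ≤ r → Ring.choose (S - (p:ℤ) + (D:ℤ)) (r - p) = ((E.choose (r-p) : ℕ):ℤ) := by
      intro r _
      rw [← hE, rc_natCast]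
    have hps := prune_shift (M := ℤ) (fun r => lam r * (if p ≤ r then (-1:ℤ)^p * Ring.choose (S - (p:ℤ) + (D:ℤ)) (r - p) else 0)) p E R₀
      (fun r hr => by beta_reduce; rw [if_neg (by omega), mul_zero])
      (fun r hr => by
        beta_reduce
        rw [if_pos (by omega), hcast r (by omega), Nat.choose_eq_zero_of_lt (by omega)]
        simp)
      (by omega)
    beta_reduce at hps
    rw [hps]
    have h5 : ∀ q ∈ range (E+1),
        lam (p+q) * (if p ≤ p+q then (-1:ℤ)^p * Ring.choose (S - (p:ℤ) + (D:ℤ)) ((p+q) - p) else 0)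
        = ((-1:ℤ)^((p+q)+w) * (((p+q).choose w : ℕ):ℤ)) * ((-1:ℤ)^p * ((E.choose q : ℕ):ℤ)) := by
      intro q _
      rw [if_pos (by omega), hcast (p+q) (by omega)]
      have : (p+q) - p = q := by omega
      rw [this, hlam]
    rw [Finset.sum_congr rfl h5]
    exact KcoB m n S hmn D w E p hw hE
  rw [← K2b, K2a]

end AuxKey

section AuxMod

open Finset

variable {M₀ : Type*} [AddCommGroup M₀]

lemma phiF_congr {F G : ℤ → ℤ → M₀} (h : ∀ x y, F x y = G x y) (m n : ℤ) :
    phiF F m n = phiF G m n := by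
  unfold phiF
  exact finsum_congr fun i => by rw [h]

lemma tauF_congr {F G : ℤ → ℤ → M₀} (h : ∀ x y, F x y = G x y) (p q : ℤ) :
    tauF F p q = tauF G p q := by
  unfold tauF
  exact finsum_congr fun j => by rw [h]

lemma mulZW'_congr {F G : ℤ → ℤ → M₀} (l : ℕ) (h : ∀ x y, F x y = G x y) (p q : ℤ) :
    mulZW' l F p q = mulZW' l G p q := by
  unfold mulZW'
  exact Finset.sum_congr rfl fun j _ => by rw [h]

lemma mulZW'_shift2 (l : ℕ) (F : ℤ → ℤ → M₀) (c p q : ℤ) :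
    mulZW' l (fun x y => F x (y - c)) p q = mulZW' l F p (q - c) := by
  unfold mulZW'
  refine Finset.sum_congr rfl fun j _ => ?_
  have : q - (j:ℤ) - c = q - c - (j:ℤ) := by ring
  simp only [this]

lemma aux_reflect (k : ℕ) (T : ℕ → M₀) :
    ∑ j ∈ range (k+1), ((-1:ℤ)^j * (k.choose j:ℤ)) • T j
      = (-1:ℤ)^k • ∑ j ∈ range (k+1), ((-1:ℤ)^j * (k.choose j:ℤ)) • T (k-j) := by
  rw [Finset.smul_sum, ← Finset.sum_range_reflect (fun j => ((-1:ℤ)^j * (k.choose j:ℤ)) • T j) (k+1)]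
  refine Finset.sum_congr rfl fun j hj => ?_
  have hjk : j ≤ k := Nat.lt_succ_iff.mp (mem_range.mp hj)
  have h1 : k + 1 - 1 - j = k - j := by omega
  rw [h1, smul_smul]
  congr 1
  rw [Nat.choose_symm hjk]
  have h3 : k - j + 2*j = k + j := by omega
  have h4 : (-1:ℤ)^(k-j) = (-1:ℤ)^(k+j) := by
    rw [← h3, pow_add, pow_mul]
    norm_num
  rw [h4, pow_add]
  ring

lemma asc_prod_eq (q : ℤ) (j : ℕ) :
    ∏ t ∈ range j, (q + 1 + (t:ℤ)) = (j.factorial : ℤ) * Ring.choose (q + (j:ℤ)) j := by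
  rw [rc_factorial (q + (j:ℤ)) j, ← Finset.prod_range_reflect (fun t => q + (j:ℤ) - (t:ℤ)) j]
  refine Finset.prod_congr rfl fun t ht => ?_
  have htj : t < j := mem_range.mp ht
  have : ((j - 1 - t : ℕ):ℤ) = (j:ℤ) - 1 - t := by omega
  rw [this]
  ring

variable (𝕜 : Type*) [Field 𝕜] [CharZero 𝕜]
  {V M : Type*} [AddCommGroup V] [Module 𝕜 V] [AddCommGroup M] [Module 𝕜 M]
  (Y : V → V → ℤ → V) (one : V) (D : V →ₗ[𝕜] V)
  (YM : V → M → ℤ → M) (d : M →ₗ[𝕜] M)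

lemma aux_inv_factorial (v : M) (q : ℤ) (j : ℕ) :
    ((j.factorial : 𝕜)⁻¹) • (((j.factorial : ℤ) * Ring.choose (q + (j:ℤ)) j) • v)
      = Ring.choose (q + (j:ℤ)) j • v := by
  rw [mul_smul, ← Int.cast_smul_eq_zsmul 𝕜 ((j.factorial:ℤ)), smul_smul]
  have h : ((j.factorial : 𝕜))⁻¹ * (((j.factorial:ℤ)):𝕜) = 1 := by
    push_cast
    exact inv_mul_cancel₀ (Nat.cast_ne_zero.mpr (Nat.factorial_ne_zero j))
  rw [h, one_smul]

lemma aux_Dpow (hM : IsVModule 𝕜 Y one D YM d) (c : V) (u : M) (j : ℕ) :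
    ∀ q : ℤ, YM ((D^j) c) u q = (∏ t ∈ range j, (q + 1 + (t:ℤ))) • YM c u (q + (j:ℤ)) := by
  induction j with
  | zero =>
      intro q
      simp only [pow_zero, Module.End.one_apply, range_zero, Finset.prod_empty, one_smul,
        Nat.cast_zero, add_zero]
  | succ j ih =>
      intro q
      have hpow : ((D^(j+1)) c) = D ((D^j) c) := by
        rw [pow_succ']
        rfl
      rw [hpow, congrFun (hM.transl ((D^j) c) u) q]
      show (q + 1) • (YM ((D^j) c) u (q+1)) = _
      rw [ih (q+1), smul_smul]
      have harg : q + 1 + (j:ℤ) = q + ((j+1:ℕ):ℤ) := by push_cast; ring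
      rw [harg]
      congr 1
      rw [Finset.prod_range_succ' (fun t => q + 1 + (t:ℤ)) j]
      have hc : ∀ t ∈ range j, q + 1 + ((t+1:ℕ):ℤ) = q + 1 + 1 + (t:ℤ) := by
        intro t _; push_cast; ring
      rw [Finset.prod_congr rfl hc]
      push_cast
      ring

lemma aux_skew (hV : IsVertexAlg 𝕜 Y one D) (hM : IsVModule 𝕜 Y one D YM d)
    (a b : V) (u : M) (p q : ℤ) :
    YM (Y b a p) u q = tauF (fun x y => YM (Y a b x) u y) p q := by
  obtain ⟨N, hN⟩ := hV.trunc a b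
  have hPT : PT N (fun x y => YM (Y a b x) u y) := by
    intro x y hx
    beta_reduce
    rw [hN x hx]
    exact (hM.linear_left u y).map_zero
  set e : V →ₗ[𝕜] M := IsLinearMap.mk' (fun v => YM v u q) (hM.linear_left u q) with he
  have heq : ∀ v : V, YM v u q = e v := fun v => rfl
  set J : ℕ := (p - N).toNat + 1 with hJdef
  have hJp : p - N < (J:ℤ) := by rw [hJdef]; push_cast; omega
  have h1 : Y b a p = ∑ j ∈ range J, ((j.factorial : 𝕜)⁻¹) • (D ^ j) ((negz (Y a b)) (p - (j:ℤ))) := by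
    rw [congrFun (hV.comm b a) p]
    unfold ezd
    apply fin2
    intro j hj
    have hz : Y a b (p - (j:ℤ)) = 0 := hN _ (by omega)
    have hz2 : (negz (Y a b)) (p - (j:ℤ)) = 0 := by unfold negz; rw [hz, smul_zero]
    rw [hz2, map_zero, smul_zero]
  rw [heq, h1, map_sum]
  rw [tauF_eq (fun x y => YM (Y a b x) u y) N hPT p q hJp]
  refine Finset.sum_congr rfl fun j hj => ?_
  rw [map_smul]
  have h2 : (negz (Y a b)) (p - (j:ℤ)) = (((p - (j:ℤ)).negOnePow : ℤ)) • Y a b (p - (j:ℤ)) := rfl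
  rw [h2, map_zsmul, map_zsmul]
  have h3 : e ((D ^ j) (Y a b (p - (j:ℤ)))) = YM ((D^j) (Y a b (p - (j:ℤ)))) u q := rfl
  rw [h3, aux_Dpow 𝕜 Y one D YM d hM (Y a b (p - (j:ℤ))) u j q, asc_prod_eq]
  rw [smul_comm ((j.factorial : 𝕜)⁻¹), aux_inv_factorial 𝕜]
  rw [smul_smul]
  rfl

end AuxMod




variable (𝕜 : Type*) [Field 𝕜] [CharZero 𝕜]
  {V M : Type*} [AddCommGroup V] [Module 𝕜 V] [AddCommGroup M] [Module 𝕜 M]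
  (Y : V → V → ℤ → V) (one : V) (D : V →ₗ[𝕜] V)
  (YM : V → M → ℤ → M) (d : M →ₗ[𝕜] M)

/-- any module over a vertex algebra satisfies weak commutativity
(locality): for all `a, b ∈ V` there is `k` with
`(x-y)^k a_x (b_y u) = (x-y)^k b_y (a_x u)` for all `u ∈ M`. -/
theorem module_locality
    (hV : IsVertexAlg 𝕜 Y one D) (hM : IsVModule 𝕜 Y one D YM d) :
    ∀ a b : V, ∃ k : ℕ, ∀ u : M,
      mulZmW k (fun m n => YM a (YM b u n) m) = mulZmW k (fun m n => YM b (YM a u m) n) := by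
  intro a b
  obtain ⟨Nab, hNab⟩ := hV.trunc a b
  refine ⟨(-Nab).toNat, fun u => ?_⟩
  set k : ℕ := (-Nab).toNat with hkdef
  have hkNab : -Nab ≤ (k:ℤ) := Int.self_le_toNat _
  have hkN : ∀ p : ℤ, p < -(k:ℤ) → Y a b p = 0 := fun p hp => hNab p (by omega)
  have hzl : ∀ (y : ℤ), YM (0:V) u y = 0 := fun y => (hM.linear_left u y).map_zero
  have hzr : ∀ (x : V) (y : ℤ), YM x (0:M) y = 0 := fun x y => (hM.linear_right x y).map_zero
  obtain ⟨l₁, hl₁⟩ := hM.assoc a b u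
  obtain ⟨l₂, hl₂⟩ := hM.assoc b a u
  set l : ℕ := max l₁ l₂ with hldef
  obtain ⟨Nb, hNb⟩ := hM.trunc b u
  obtain ⟨Na, hNa⟩ := hM.trunc a u
  have hQTA : QT Nb (fun x y => YM a (YM b u y) x) := fun x y hy => by
    beta_reduce; rw [hNb y hy, hzr]
  have hQTB : QT Na (fun x y => YM b (YM a u y) x) := fun x y hy => by
    beta_reduce; rw [hNa y hy, hzr]
  have hPTC1 : PT (-(k:ℤ)) (fun p q => YM (Y a b p) u q) := fun p q hp => by
    beta_reduce; rw [hkN p hp, hzl]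
  have hshift1 : shiftComp YM a (YM b u) = psiF (fun x y => YM a (YM b u y) x) := rfl
  have hshift2 : shiftComp YM b (YM a u) = psiF (fun x y => YM b (YM a u y) x) := rfl
  rw [hshift1] at hl₁
  rw [hshift2] at hl₂
  have hl₁' : mulZW' l₁ (fun m' n' => YM (Y a b m') u n')
      = mulZW' l₁ (psiF (fun x y => YM a (YM b u y) x)) := hl₁
  have hl₂' : mulZW' l₂ (fun m' n' => YM (Y b a m') u n')
      = mulZW' l₂ (psiF (fun x y => YM b (YM a u y) x)) := hl₂
  have hA1 : mulZW' l (fun p q => YM (Y a b p) u q)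
      = mulZW' l (psiF (fun x y => YM a (YM b u y) x)) := by
    have hb := mulZW'_boost l₁ (l - l₁) _ _ hl₁'
    rwa [Nat.add_sub_cancel' (le_max_left l₁ l₂)] at hb
  have hA2 : mulZW' l (fun p q => YM (Y b a p) u q)
      = mulZW' l (psiF (fun x y => YM b (YM a u y) x)) := by
    have hb := mulZW'_boost l₂ (l - l₂) _ _ hl₂'
    rwa [Nat.add_sub_cancel' (le_max_right l₁ l₂)] at hb
  have hPTml : PT (-(k:ℤ)) (mulZW' l (fun p q => YM (Y a b p) u q)) :=
    PT_mulZW' _ l _ hPTC1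
  have hskew : ∀ x y : ℤ, tauF (fun x' y' => YM (Y a b x') u y') x y = YM (Y b a x) u y :=
    fun x y => (aux_skew 𝕜 Y one D YM d hV hM a b u x y).symm
  show mulZmW' k (fun m n => YM a (YM b u n) m) = mulZmW' k (fun m n => YM b (YM a u m) n)
  funext m n
  set SS : ℤ := m + n + 2*(l:ℤ) with hSSdef
  -- the tau chain
  have tchain : ∀ p q : ℤ,
      tauF (fun x y => (mulZW' l (fun p' q' => YM (Y a b p') u q')) (x - (k:ℤ)) (y - (l:ℤ))) p q
        = ((-1:ℤ)^k) • (mulZW' l (fun p' q' => YM (Y b a p') u q')) (p - (k:ℤ)) (q - (l:ℤ)) := by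
    intro p q
    have s1 := tauF_sigma k (fun x y => (mulZW' l (fun p' q' => YM (Y a b p') u q')) x (y - (l:ℤ)))
      (-(k:ℤ)) (fun x y hx => by beta_reduce; exact hPTml x _ hx) p q
    have s0 : tauF (fun x y => (mulZW' l (fun p' q' => YM (Y a b p') u q')) (x - (k:ℤ)) (y - (l:ℤ))) p q
        = tauF (fun x y => (fun x' y' => (mulZW' l (fun p' q' => YM (Y a b p') u q')) x' (y' - (l:ℤ))) (x - (k:ℤ)) y) p q :=
      tauF_congr (fun x y => rfl) p q
    rw [s0, s1]
    congr 1
    have s2 := tauF_sigma2 l (mulZW' l (fun p' q' => YM (Y a b p') u q')) (-(k:ℤ)) hPTml (p - (k:ℤ)) q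
    rw [s2]
    have s3 : ∀ x y : ℤ, tauF (mulZW' l (fun p' q' => YM (Y a b p') u q')) x y
        = YM (Y b a x) u (y - (l:ℤ)) := by
      intro x y
      rw [tauF_mulZW' l _ (-(k:ℤ)) hPTC1, hskew]
    rw [mulZW'_congr l s3]
    rw [show (fun x y => YM (Y b a x) u (y - (l:ℤ)))
        = (fun x y => (fun x' y' => YM (Y b a x') u y') x (y - (l:ℤ))) from rfl]
    rw [mulZW'_shift2 l (fun x' y' => YM (Y b a x') u y') (l:ℤ) (p - (k:ℤ)) q]
  -- bounds for key
  set P : ℕ := (SS - (l:ℤ) - Nb).toNat with hPdef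
  have hPSS : SS - (l:ℤ) - Nb ≤ (P:ℤ) := Int.self_le_toNat _
  set Q : ℕ := (SS - (l:ℤ) - Na).toNat with hQdef
  have hQSS : SS - (l:ℤ) - Na ≤ (Q:ℤ) := Int.self_le_toNat _
  have hlow : ∀ p : ℤ, p < 0 →
      (mulZW' l (fun p' q' => YM (Y a b p') u q')) (p - (k:ℤ)) (SS - p - (l:ℤ)) = 0 := by
    intro p hp
    unfold mulZW'
    refine Finset.sum_eq_zero fun j _ => ?_
    have harg : p - (k:ℤ) - ((l - j : ℕ):ℤ) < -(k:ℤ) := by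
      have : (0:ℤ) ≤ ((l - j : ℕ):ℤ) := Int.natCast_nonneg _
      omega
    rw [hPTC1 _ _ harg, smul_zero]
  have hhigh : ∀ p : ℤ, (P:ℤ) < p →
      (mulZW' l (fun p' q' => YM (Y a b p') u q')) (p - (k:ℤ)) (SS - p - (l:ℤ)) = 0 := by
    intro p hp
    rw [congrFun (congrFun hA1 (p - (k:ℤ))) (SS - p - (l:ℤ))]
    exact QT_mulZW' Nb l _ (QT_psiF Nb _ hQTA) _ _ (by omega)
  have htQ : ∀ q : ℤ, (Q:ℤ) < q →
      tauF (fun x y => (mulZW' l (fun p' q' => YM (Y a b p') u q')) (x - (k:ℤ)) (y - (l:ℤ))) q (SS - q) = 0 := by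
    intro q hq
    rw [tchain q (SS - q)]
    rw [congrFun (congrFun hA2 (q - (k:ℤ))) (SS - q - (l:ℤ))]
    rw [QT_mulZW' Na l _ (QT_psiF Na _ hQTB) _ _ (by omega), smul_zero]
  have happ := key SS
    (fun p => (mulZW' l (fun p' q' => YM (Y a b p') u q')) (p - (k:ℤ)) (SS - p - (l:ℤ)))
    (fun q => tauF (fun x y => (mulZW' l (fun p' q' => YM (Y a b p') u q')) (x - (k:ℤ)) (y - (l:ℤ))) q (SS - q))
    P Q hlow hhigh
    (by
      intro q
      unfold tauF
      refine finsum_congr fun j => ?_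
      congr 2
      ring)
    htQ (m + (l:ℤ)) (n + (l:ℤ)) (by rw [hSSdef]; ring)
  -- A-side
  have hQTS1 : QT Nb (mulZW' l (psiF (fun x y => YM a (YM b u y) x))) :=
    QT_mulZW' Nb l _ (QT_psiF Nb _ hQTA)
  have Aside : phiF (fun p q => (mulZW' l (psiF (fun x y => YM a (YM b u y) x))) (p - (k:ℤ)) q) (m + (l:ℤ)) n
      = mulZmW' k (fun x y => YM a (YM b u y) x) m n := by
    rw [phiF_sigma k _ Nb hQTS1 (m + (l:ℤ)) n]
    unfold mulZmW'
    refine Finset.sum_congr rfl fun j _ => ?_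
    congr 1
    beta_reduce
    rw [phiF_mulZW' l _ Nb (QT_psiF Nb _ hQTA), phiF_psiF _ Nb hQTA]
    have harg : m + (l:ℤ) - ((k-j:ℕ):ℤ) - (l:ℤ) = m - ((k-j:ℕ):ℤ) := by ring
    rw [harg]
  have Bside : phiF (fun p q => (mulZW' l (psiF (fun x y => YM b (YM a u y) x))) (p - (k:ℤ)) q) (n + (l:ℤ)) m
      = ((-1:ℤ)^k) • mulZmW' k (fun m' n' => YM b (YM a u m') n') m n := by
    have hQTS2 : QT Na (mulZW' l (psiF (fun x y => YM b (YM a u y) x))) :=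
      QT_mulZW' Na l _ (QT_psiF Na _ hQTB)
    rw [phiF_sigma k _ Na hQTS2 (n + (l:ℤ)) m]
    have hx : ∀ j : ℕ, phiF (mulZW' l (psiF (fun x y => YM b (YM a u y) x)))
        (n + (l:ℤ) - ((k - j : ℕ):ℤ)) (m - (j:ℤ))
        = YM b (YM a u (m - (j:ℤ))) (n - ((k - j : ℕ):ℤ)) := by
      intro j
      rw [phiF_mulZW' l _ Na (QT_psiF Na _ hQTB), phiF_psiF _ Na hQTB]
      have harg : n + (l:ℤ) - ((k-j:ℕ):ℤ) - (l:ℤ) = n - ((k-j:ℕ):ℤ) := by ring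
      rw [harg]
    show ∑ j ∈ Finset.range (k+1), ((-1:ℤ)^j * (k.choose j : ℤ)) •
        phiF (mulZW' l (psiF (fun x y => YM b (YM a u y) x))) (n + (l:ℤ) - ((k - j : ℕ):ℤ)) (m - (j:ℤ)) = _
    rw [Finset.sum_congr rfl (fun j _ => by rw [hx j])]
    have hrefl := aux_reflect k (fun j => YM b (YM a u (m - (j:ℤ))) (n - ((k - j : ℕ):ℤ)))
    rw [hrefl]
    congr 1
    unfold mulZmW'
    refine Finset.sum_congr rfl fun j hj => ?_
    have hjk : j ≤ k := Nat.lt_succ_iff.mp (Finset.mem_range.mp hj)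
    have h1 : k - (k - j) = j := by omega
    rw [h1]
  -- chain everything
  calc mulZmW' k (fun m' n' => YM a (YM b u n') m') m n
      = phiF (fun p q => (mulZW' l (psiF (fun x y => YM a (YM b u y) x))) (p - (k:ℤ)) q) (m + (l:ℤ)) n := Aside.symm
    _ = ∑ᶠ i : ℕ, ccoef (m + (l:ℤ)) i •
          (mulZW' l (fun p' q' => YM (Y a b p') u q')) ((m + (l:ℤ) + (i:ℤ)) - (k:ℤ)) (SS - (m + (l:ℤ) + (i:ℤ)) - (l:ℤ)) := by
        unfold phiF
        refine finsum_congr fun i => ?_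
        beta_reduce
        have harg : n - (i:ℤ) = SS - (m + (l:ℤ) + (i:ℤ)) - (l:ℤ) := by rw [hSSdef]; ring
        rw [harg, ← congrFun (congrFun hA1 (m + (l:ℤ) + (i:ℤ) - (k:ℤ))) (SS - (m + (l:ℤ) + (i:ℤ)) - (l:ℤ))]
    _ = ∑ᶠ i : ℕ, ccoef (n + (l:ℤ)) i •
          tauF (fun x y => (mulZW' l (fun p' q' => YM (Y a b p') u q')) (x - (k:ℤ)) (y - (l:ℤ))) (n + (l:ℤ) + (i:ℤ)) (SS - (n + (l:ℤ) + (i:ℤ))) := happ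
    _ = ((-1:ℤ)^k) • phiF (fun p q => (mulZW' l (psiF (fun x y => YM b (YM a u y) x))) (p - (k:ℤ)) q) (n + (l:ℤ)) m := by
        have hQTFB : QT (Na + (l:ℤ)) (fun p q => (mulZW' l (psiF (fun x y => YM b (YM a u y) x))) (p - (k:ℤ)) (q - (l:ℤ))) := by
          intro p q hq
          beta_reduce
          exact QT_mulZW' Na l _ (QT_psiF Na _ hQTB) _ _ (by omega)
        have hIbound : (Q:ℤ) - (n + (l:ℤ)) < (((Q - (n + (l:ℤ)) + 1).toNat : ℕ):ℤ) := by
          have := Int.self_le_toNat ((Q:ℤ) - (n + (l:ℤ)) + 1)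
          omega
        set I : ℕ := ((Q:ℤ) - (n + (l:ℤ)) + 1).toNat with hIdef
        have hfin : ∀ i : ℕ, I ≤ i → ccoef (n + (l:ℤ)) i •
            tauF (fun x y => (mulZW' l (fun p' q' => YM (Y a b p') u q')) (x - (k:ℤ)) (y - (l:ℤ))) (n + (l:ℤ) + (i:ℤ)) (SS - (n + (l:ℤ) + (i:ℤ))) = 0 := by
          intro i hi
          have hi' : (I:ℤ) ≤ (i:ℤ) := by exact_mod_cast hi
          rw [htQ (n + (l:ℤ) + (i:ℤ)) (by omega), smul_zero]
        rw [fin2 _ I hfin]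
        have hphi : phiF (fun p q => (mulZW' l (psiF (fun x y => YM b (YM a u y) x))) (p - (k:ℤ)) q) (n + (l:ℤ)) m
            = phiF (fun p q => (mulZW' l (psiF (fun x y => YM b (YM a u y) x))) (p - (k:ℤ)) (q - (l:ℤ))) (n + (l:ℤ)) (m + (l:ℤ)) := by
          unfold phiF
          refine finsum_congr fun i => ?_
          congr 2
          ring
        rw [hphi, phiF_eq _ (Na + (l:ℤ)) hQTFB (n + (l:ℤ)) (m + (l:ℤ)) (show m + (l:ℤ) - (Na + (l:ℤ)) < (I:ℤ) by rw [hIdef] at hIbound ⊢; omega)]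
        rw [Finset.smul_sum]
        refine Finset.sum_congr rfl fun i _ => ?_
        beta_reduce
        rw [tchain (n + (l:ℤ) + (i:ℤ)) (SS - (n + (l:ℤ) + (i:ℤ)))]
        rw [congrFun (congrFun hA2 (n + (l:ℤ) + (i:ℤ) - (k:ℤ))) (SS - (n + (l:ℤ) + (i:ℤ)) - (l:ℤ))]
        have harg2 : SS - (n + (l:ℤ) + (i:ℤ)) - (l:ℤ) = m + (l:ℤ) - (i:ℤ) - (l:ℤ) := by
          rw [hSSdef]; ring
        rw [harg2, smul_comm]
    _ = ((-1:ℤ)^k) • (((-1:ℤ)^k) • mulZmW' k (fun m' n' => YM b (YM a u m') n') m n) := by rw [Bside]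
    _ = mulZmW' k (fun m' n' => YM b (YM a u m') n') m n := by
        rw [smul_smul, ← pow_add, ← two_mul, pow_mul]
        norm_num

end VertexCohomology
end

section
/- Let $V$ be a vertex algebra, $M$ a $V$-module, and let $\psi, \phi \in Z^2(V,M)$ determine square-zero extensions $(V\oplus M, {}_z^1, p_1, i_2)$ and $(V\oplus M, {}_z^2, p_1, i_2)$. Suppose $h : V \oplus M \to V \oplus M$ is an isomorphism of vertex algebras with $p_1 \circ h = p_1$ and $h \circ i_2 = i_2$. Then there exists $g \in C^1(V,M)$ (i.e. $g$ linear with $g(Da) = dg(a)$ and $g(\mathbf{1}) = 0$) such that $h(a,u) = (a, u + g(a))$ for all $(a,u)$, and $\psi = \phi + \delta_1(g)$. -/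
/- Coefficient-wise formalization of vertex algebras:
a series `w ∈ V((z))` is encoded by its coefficient function `ℤ → V`
(the value at `n` being the coefficient of `z^n`), and a field/product
`a ⊗ b ↦ a_z b ∈ V((z))` by a map `V → V → ℤ → V`. -/

namespace VertexCohomology

open scoped BigOperators

variable (𝕜 : Type*) [Field 𝕜] [CharZero 𝕜]
  {V M : Type*} [AddCommGroup V] [Module 𝕜 V] [AddCommGroup M] [Module 𝕜 M]
  (Y : V → V → ℤ → V) (one : V) (D : V →ₗ[𝕜] V)
  (YM : V → M → ℤ → M) (d : M →ₗ[𝕜] M)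

/-- an isomorphism of square-zero extensions compatible with `p₁`
and `i₂` has the form `h(a,u) = (a, u + g(a))` for some `g ∈ C¹(V,M)`, and then
`ψ = φ + δ₁ g`. -/
theorem cohomologous_of_equivalent_extensions
    (hV : IsVertexAlg 𝕜 Y one D) (hM : IsVModule 𝕜 Y one D YM d)
    (ψ φ : V → V → ℤ → M)
    (hψ : IsC2 𝕜 one D d ψ) (hψZ : Cocycle 𝕜 Y YM d ψ)
    (hφ : IsC2 𝕜 one D d φ) (hφZ : Cocycle 𝕜 Y YM d φ)
    (h : (V × M) →ₗ[𝕜] (V × M)) (hbij : Function.Bijective h)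
    (hprod : ∀ (p q : V × M) (n : ℤ),
      h (extY 𝕜 Y YM d ψ p q n) = extY 𝕜 Y YM d φ (h p) (h q) n)
    (hvac : h ((one, 0) : V × M) = (one, 0))
    (hD : ∀ p : V × M, h (D.prodMap d p) = D.prodMap d (h p))
    (hp1 : ∀ p : V × M, (h p).1 = p.1)
    (hi2 : ∀ u : M, h ((0 : V), u) = ((0 : V), u)) :
    ∃ g : V →ₗ[𝕜] M, (∀ a, g (D a) = d (g a)) ∧ g one = 0 ∧
      (∀ (a : V) (u : M), h (a, u) = (a, u + g a)) ∧
      (∀ a b n, ψ a b n = φ a b n + delta1 𝕜 Y YM d g a b n) := by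
  refine ⟨(LinearMap.snd 𝕜 V M).comp (h.comp (LinearMap.inl 𝕜 V M)), ?_, ?_, ?_, ?_⟩
  · intro a
    simpa using congrArg Prod.snd (hD (a, 0))
  · simpa using congrArg Prod.snd hvac
  · intro a u
    have key : ∀ a u, h (a, u) = (a, u + (h (a, (0:M))).2) := by
      intro a u
      have : ((a, u) : V × M) = (a, 0) + (0, u) := by simp
      rw [this, map_add, hi2]
      have h1 : h (a, (0:M)) = (a, (h (a, (0:M))).2) := by
        ext
        · exact hp1 _
        · rfl
      rw [h1]
      simp [add_comm]
    simpa using key a u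
  · intro a b n
    have := hprod (a, 0) (b, 0) n
    simp only [extY] at this
    have h1 : h (a, (0:M)) = (a, (h (a, (0:M))).2) := by
      ext
      · exact hp1 _
      · rfl
    have h2 : h (b, (0:M)) = (b, (h (b, (0:M))).2) := by
      ext
      · exact hp1 _
      · rfl
    rw [h1, h2] at this
    have hr0 : rAct 𝕜 YM d 0 b n = 0 := by
      have hz : ∀ m : ℤ, YM b (0:M) m = 0 := fun m => (hM.linear_right b m).map_zero
      simp [rAct, ezd, negz, hz]
    have hY0 : YM a (0:M) n = 0 := (hM.linear_right a n).map_zero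
    have hL : h (Y a b n, YM a 0 n + rAct 𝕜 YM d 0 b n + ψ a b n)
        = (Y a b n, (ψ a b n) + (h (Y a b n, (0:M))).2) := by
      rw [hY0, hr0]
      have : ((Y a b n, (0:M) + 0 + ψ a b n) : V × M) = (Y a b n, ψ a b n) := by simp
      rw [this]
      have : ((Y a b n, ψ a b n) : V × M) = (Y a b n, 0) + (0, ψ a b n) := by simp
      rw [this, map_add, hi2]
      have h3 : h (Y a b n, (0:M)) = (Y a b n, (h (Y a b n, (0:M))).2) := by
        ext
        · exact hp1 _
        · rfl
      rw [h3]
      simp [add_comm]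
    rw [hL] at this
    have := congrArg Prod.snd this
    simp only [delta1, LinearMap.comp_apply, LinearMap.inl_apply, LinearMap.snd_apply] at this ⊢
    have key : ψ a b n = YM a (h (b, (0:M))).2 n + rAct 𝕜 YM d (h (a, (0:M))).2 b n
        + φ a b n - (h (Y a b n, (0:M))).2 := by rw [← this]; abel
    rw [key]; abel


end VertexCohomology
end

section
/- Let $V$ be a vertex algebra and $f_z : V \otimes V \to V((z))$ linear. The deformed product $a\,{}_z^t\, b := a\,{}_z\, b + t\, f_z(a,b)$ satisfies associativity modulo $t^2$ — i.e. for all $a,b,c$ there exists $l$ with $(z+w)^l\,(a\,{}_z^t\, b)\,{}_w^t\, c = (z+w)^l\, a\,{}_{z+w}^t\,(b\,{}_w^t\, c) \pmod{t^2}$ — if and only if $V$ satisfies associativity and for all $a,b,c \in V$ there exists $n \in \mathbb{N}$ such that $(w+z)^n\big[f_w(a\,{}_z\, b, c) + f_z(a,b)\,{}_w\, c\big] = (w+z)^n\big[a\,{}_{z+w}\, f_w(b,c) + f_{z+w}(a, b\,{}_w\, c)\big]$. -/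
/- Coefficient-wise formalization of vertex algebras:
a series `w ∈ V((z))` is encoded by its coefficient function `ℤ → V`
(the value at `n` being the coefficient of `z^n`), and a field/product
`a ⊗ b ↦ a_z b ∈ V((z))` by a map `V → V → ℤ → V`. -/

namespace VertexCohomology

open scoped BigOperators

section Aux

variable {V W : Type*} [AddCommGroup V] [AddCommGroup W]

/-- Truncation of a series. -/
def Trnc (u : ℤ → V) : Prop := ∃ N : ℤ, ∀ n < N, u n = 0

lemma Trnc.add {u v : ℤ → V} (hu : Trnc u) (hv : Trnc v) :
    Trnc (fun n => u n + v n) := by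
  obtain ⟨N, hN⟩ := hu
  obtain ⟨M, hM⟩ := hv
  refine ⟨min N M, fun n hn => ?_⟩
  show u n + v n = 0
  rw [hN n (lt_of_lt_of_le hn (min_le_left _ _)),
    hM n (lt_of_lt_of_le hn (min_le_right _ _)), add_zero]

lemma mulZW_congr {l : ℕ} {F G : ℤ → ℤ → V} (h : ∀ m n, F m n = G m n) :
    mulZW l F = mulZW l G := by
  funext m n
  simp only [mulZW]
  exact Finset.sum_congr rfl fun k _ => by rw [h]

lemma mulZW_succ (l : ℕ) (F : ℤ → ℤ → V) (m n : ℤ) :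
    mulZW (l + 1) F m n = mulZW l F (m - 1) n + mulZW l F m (n - 1) := by
  simp only [mulZW]
  rw [Finset.sum_range_succ'
      (fun k => (((l+1).choose k : ℤ)) • F (m - ((l + 1 - k : ℕ) : ℤ)) (n - (k : ℤ))) (l + 1),
    Finset.sum_range_succ'
      (fun k => ((l.choose k : ℤ)) • F (m - 1 - ((l - k : ℕ) : ℤ)) (n - (k : ℤ))) l]
  have hA : ∀ k ∈ Finset.range (l+1),
      (fun k => (((l+1).choose k : ℤ)) • F (m - ((l + 1 - k : ℕ) : ℤ)) (n - (k : ℤ))) (k + 1)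
        = ((l.choose k : ℤ)) • F (m - ((l - k : ℕ) : ℤ)) (n - 1 - (k : ℤ))
          + ((l.choose (k+1) : ℤ)) • F (m - ((l - k : ℕ) : ℤ)) (n - 1 - (k : ℤ)) := by
    intro k hk
    simp only
    have h0 : (l + 1 - (k + 1) : ℕ) = (l - k : ℕ) := by omega
    have h1 : (((l+1).choose (k+1)) : ℤ) = (l.choose k : ℤ) + (l.choose (k+1) : ℤ) := by
      rw [Nat.choose_succ_succ]; push_cast; ring
    have h2 : n - ((k + 1 : ℕ) : ℤ) = n - 1 - (k : ℤ) := by push_cast; ring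
    rw [h0, h1, add_smul, h2]
  rw [Finset.sum_congr rfl hA, Finset.sum_add_distrib]
  have hB : ∑ k ∈ Finset.range (l + 1),
      ((l.choose (k+1) : ℤ)) • F (m - ((l - k : ℕ) : ℤ)) (n - 1 - (k:ℤ))
      = ∑ k ∈ Finset.range l,
        ((l.choose (k+1) : ℤ)) • F (m - 1 - ((l - (k+1) : ℕ) : ℤ)) (n - ((k+1 : ℕ) : ℤ)) := by
    rw [Finset.sum_range_succ, Nat.choose_succ_self]
    simp only [Int.natCast_zero, zero_smul, add_zero]
    refine Finset.sum_congr rfl fun k hk => ?_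
    simp only [Finset.mem_range] at hk
    have e1 : m - ((l - k : ℕ) : ℤ) = m - 1 - ((l - (k+1) : ℕ) : ℤ) := by omega
    have e2 : n - 1 - (k:ℤ) = n - ((k+1 : ℕ) : ℤ) := by push_cast; ring
    rw [e1, e2]
  rw [hB]
  have hD : (((l+1).choose 0 : ℕ) : ℤ) • F (m - ((l + 1 - 0 : ℕ) : ℤ)) (n - ((0:ℕ) : ℤ))
      = ((l.choose 0 : ℕ) : ℤ) • F (m - 1 - ((l - 0 : ℕ) : ℤ)) (n - ((0:ℕ) : ℤ)) := by
    rw [show m - ((l + 1 - 0 : ℕ) : ℤ) = m - 1 - ((l - 0 : ℕ) : ℤ) by omega,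
      show (((l+1).choose 0 : ℕ) : ℤ) = ((l.choose 0 : ℕ) : ℤ) by simp]
  rw [hD]
  abel

lemma mulZW_mono {F G : ℤ → ℤ → V} {l : ℕ} (h : mulZW l F = mulZW l G) (d : ℕ) :
    mulZW (l + d) F = mulZW (l + d) G := by
  induction d with
  | zero => exact h
  | succ d ih =>
    funext m n
    show mulZW ((l + d) + 1) F m n = mulZW ((l + d) + 1) G m n
    rw [mulZW_succ, mulZW_succ, ih]

lemma mulZW_of_le {F G : ℤ → ℤ → V} {l L : ℕ} (hle : l ≤ L)
    (h : mulZW l F = mulZW l G) : mulZW L F = mulZW L G := by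
  obtain ⟨d, rfl⟩ := Nat.exists_eq_add_of_le hle
  exact mulZW_mono h d

lemma mulZW_mk (l : ℕ) (F1 : ℤ → ℤ → V) (F2 : ℤ → ℤ → W) (m n : ℤ) :
    mulZW l (fun m n => (F1 m n, F2 m n)) m n = (mulZW l F1 m n, mulZW l F2 m n) := by
  simp [mulZW, Prod.ext_iff, Prod.fst_sum, Prod.snd_sum]

lemma mulZW_pair_iff {l : ℕ} {F1 G1 : ℤ → ℤ → V} {F2 G2 : ℤ → ℤ → W} :
    mulZW l (fun m n => (F1 m n, F2 m n)) = mulZW l (fun m n => (G1 m n, G2 m n))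
      ↔ (mulZW l F1 = mulZW l G1 ∧ mulZW l F2 = mulZW l G2) := by
  constructor
  · intro h
    constructor <;> funext m n <;>
      [skip; skip] <;>
      · have hk := congrFun (congrFun h m) n
        rw [mulZW_mk, mulZW_mk] at hk
        first
          | exact congrArg Prod.fst hk
          | exact congrArg Prod.snd hk
  · rintro ⟨h1, h2⟩
    funext m n
    rw [mulZW_mk, mulZW_mk, congrFun (congrFun h1 m) n, congrFun (congrFun h2 m) n]

lemma support_fin {g : ℕ → V} {N n : ℤ} (h : ∀ i : ℕ, n - (i : ℤ) < N → g i = 0) :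
    (Function.support g).Finite := by
  apply Set.Finite.subset (Set.finite_Iic (n - N).toNat)
  intro i hi
  simp only [Function.mem_support] at hi
  simp only [Set.mem_Iic]
  by_contra hc
  exact hi (h i (by omega))

lemma supp_fin_of_trnc {A : Type*} {F : A → V → ℤ → W} (hF0 : ∀ x k, F x 0 k = 0) (a : A)
    {u : ℤ → V} (hu : Trnc u) (m n : ℤ) :
    (Function.support fun i : ℕ =>
      (Ring.choose (m + (i : ℤ)) i) • F a (u (n - (i : ℤ))) (m + (i : ℤ))).Finite := by
  obtain ⟨N, hN⟩ := hu
  exact support_fin (fun i hi => by rw [hN _ hi, hF0, smul_zero])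

lemma shiftComp_zero_left {A : Type*} [AddCommGroup A] {F : A → V → ℤ → W}
    (hF0 : ∀ x k, F 0 x k = 0) (u : ℤ → V) (m n : ℤ) :
    shiftComp F 0 u m n = 0 := by
  simp [shiftComp, hF0]

lemma shiftComp_add_right {A : Type*} {F : A → V → ℤ → W}
    (hF0 : ∀ x k, F x 0 k = 0)
    (hFadd : ∀ x u v k, F x (u + v) k = F x u k + F x v k)
    (a : A) (w u v : ℤ → V) (hw : ∀ k, w k = u k + v k)
    (hu : Trnc u) (hv : Trnc v) (m n : ℤ) :
    shiftComp F a w m n = shiftComp F a u m n + shiftComp F a v m n := by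
  simp only [shiftComp]
  rw [← finsum_add_distrib (supp_fin_of_trnc hF0 a hu m n) (supp_fin_of_trnc hF0 a hv m n)]
  exact finsum_congr fun i => by rw [hw, hFadd, smul_add]

lemma finsum_prod {g : ℕ → V} {h : ℕ → W}
    (hg : (Function.support g).Finite) (hh : (Function.support h).Finite) :
    ∑ᶠ i, (g i, h i) = (∑ᶠ i, g i, ∑ᶠ i, h i) := by
  have hs : (Function.support fun i => ((g i, h i) : V × W)).Finite := by
    apply Set.Finite.subset (hg.union hh)
    intro i hi
    simp only [Function.mem_support, Set.mem_union] at hi ⊢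
    by_contra hc
    push_neg at hc
    exact hi (by rw [hc.1, hc.2]; rfl)
  refine Prod.ext ?_ ?_
  · exact (AddMonoidHom.map_finsum (AddMonoidHom.fst V W) hs)
  · exact (AddMonoidHom.map_finsum (AddMonoidHom.snd V W) hs)

end Aux

section Aux2

variable {V : Type*} [AddCommGroup V]

lemma shiftComp_defY {Y f : V → V → ℤ → V}
    (hY0r : ∀ x k, Y x 0 k = 0) (hf0r : ∀ x k, f x 0 k = 0)
    (a a' : V) (u : ℤ → V × V) (u1 u2 : ℤ → V)
    (hu : ∀ k, u k = (u1 k, u2 k)) (h1 : Trnc u1) (h2 : Trnc u2) (m n : ℤ) :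
    shiftComp (defY Y f) (a, a') u m n
      = (shiftComp Y a u1 m n,
         shiftComp Y a u2 m n + shiftComp Y a' u1 m n + shiftComp f a u1 m n) := by
  simp only [shiftComp]
  have hterm : ∀ i : ℕ,
      (Ring.choose (m + (i : ℤ)) i) • defY Y f (a, a') (u (n - (i : ℤ))) (m + (i : ℤ))
        = ((Ring.choose (m + (i : ℤ)) i) • Y a (u1 (n - (i : ℤ))) (m + (i : ℤ)),
           (Ring.choose (m + (i : ℤ)) i) • Y a (u2 (n - (i : ℤ))) (m + (i : ℤ))
             + (Ring.choose (m + (i : ℤ)) i) • Y a' (u1 (n - (i : ℤ))) (m + (i : ℤ))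
             + (Ring.choose (m + (i : ℤ)) i) • f a (u1 (n - (i : ℤ))) (m + (i : ℤ))) := by
    intro i
    rw [hu]
    simp only [defY, smul_add, Prod.smul_mk]
  rw [finsum_congr hterm]
  have hs1 := supp_fin_of_trnc hY0r a h1 m n
  have hs2 := supp_fin_of_trnc hY0r a h2 m n
  have hs3 := supp_fin_of_trnc hY0r a' h1 m n
  have hs4 := supp_fin_of_trnc hf0r a h1 m n
  have hs23 : (Function.support fun i : ℕ =>
      (Ring.choose (m + (i : ℤ)) i) • Y a (u2 (n - (i : ℤ))) (m + (i : ℤ))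
        + (Ring.choose (m + (i : ℤ)) i) • Y a' (u1 (n - (i : ℤ))) (m + (i : ℤ))).Finite := by
    apply Set.Finite.subset (hs2.union hs3)
    intro i hi
    simp only [Function.mem_support, Set.mem_union] at hi ⊢
    by_contra hc
    push_neg at hc
    exact hi (by rw [hc.1, hc.2, add_zero])
  have hsnd : (Function.support fun i : ℕ =>
      (Ring.choose (m + (i : ℤ)) i) • Y a (u2 (n - (i : ℤ))) (m + (i : ℤ))
        + (Ring.choose (m + (i : ℤ)) i) • Y a' (u1 (n - (i : ℤ))) (m + (i : ℤ))
        + (Ring.choose (m + (i : ℤ)) i) • f a (u1 (n - (i : ℤ))) (m + (i : ℤ))).Finite := by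
    apply Set.Finite.subset (hs23.union hs4)
    intro i hi
    simp only [Function.mem_support, Set.mem_union] at hi ⊢
    by_contra hc
    push_neg at hc
    exact hi (by rw [hc.1, hc.2, add_zero])
  rw [finsum_prod hs1 hsnd]
  refine Prod.ext rfl ?_
  show (∑ᶠ i : ℕ, _) = _
  rw [finsum_add_distrib hs23 hs4, finsum_add_distrib hs2 hs3]

end Aux2


variable (𝕜 : Type*) [Field 𝕜] [CharZero 𝕜]
  {V : Type*} [AddCommGroup V] [Module 𝕜 V]
  (Y : V → V → ℤ → V) (one : V) (D : V →ₗ[𝕜] V)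

/-- the deformed product satisfies associativity modulo `t²` iff `V`
satisfies associativity and `f` satisfies the cocycle-type identity
`(w+z)^n [f_w(a_z b, c) + f_z(a,b)_w c] = (w+z)^n [a_{z+w} f_w(b,c) + f_{z+w}(a, b_w c)]`. -/
theorem deformation_associativity_iff
    (hV : IsVertexAlg 𝕜 Y one D) (f : V → V → ℤ → V)
    (hfl : ∀ (b : V) (n : ℤ), IsLinearMap 𝕜 (fun a => f a b n))
    (hfr : ∀ (a : V) (n : ℤ), IsLinearMap 𝕜 (fun b => f a b n))
    (hft : ∀ a b, ∃ N : ℤ, ∀ n < N, f a b n = 0) :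
    (∀ p q r : V × V, ∃ l : ℕ,
        mulZW l (fun m n => defY Y f (defY Y f p q m) r n)
          = mulZW l (shiftComp (defY Y f) p (defY Y f q r)))
      ↔ ((∀ a b c : V, ∃ l : ℕ,
            mulZW l (fun m n => Y (Y a b m) c n) = mulZW l (shiftComp Y a (Y b c))) ∧
          (∀ a b c : V, ∃ N : ℕ,
            mulZW N (fun m n => f (Y a b m) c n + Y (f a b m) c n)
              = mulZW N (fun m n => shiftComp Y a (f b c) m n + shiftComp f a (Y b c) m n))) := by
  have hY0r : ∀ (x : V) (k : ℤ), Y x 0 k = 0 := fun x k => (hV.linear_right x k).map_zero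
  have hY0l : ∀ (x : V) (k : ℤ), Y 0 x k = 0 := fun x k => (hV.linear_left x k).map_zero
  have hf0r : ∀ (x : V) (k : ℤ), f x 0 k = 0 := fun x k => (hfr x k).map_zero
  have hYaddr : ∀ (x u v : V) (k : ℤ), Y x (u + v) k = Y x u k + Y x v k :=
    fun x u v k => (hV.linear_right x k).map_add u v
  have hYaddl : ∀ (u v x : V) (k : ℤ), Y (u + v) x k = Y u x k + Y v x k :=
    fun u v x k => (hV.linear_left x k).map_add u v
  constructor
  · intro h
    have key : ∀ a b c : V, ∃ l : ℕ,
        mulZW l (fun m n => (Y (Y a b m) c n, f (Y a b m) c n + Y (f a b m) c n))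
          = mulZW l (fun m n => (shiftComp Y a (Y b c) m n,
              shiftComp Y a (f b c) m n + shiftComp f a (Y b c) m n)) := by
      intro a b c
      obtain ⟨l, hl⟩ := h (a, 0) (b, 0) (c, 0)
      refine ⟨l, ?_⟩
      have hF : ∀ m n, defY Y f (defY Y f (a, 0) (b, 0) m) (c, 0) n
          = (Y (Y a b m) c n, f (Y a b m) c n + Y (f a b m) c n) := by
        intro m n
        simp only [defY, hY0r, hY0l, zero_add]
        rw [Prod.mk.injEq]
        exact ⟨rfl, add_comm _ _⟩
      have hT2 : Trnc (fun k => Y b 0 k + Y 0 c k + f b c k) := by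
        obtain ⟨N, hN⟩ := hft b c
        refine ⟨N, fun k hk => ?_⟩
        show Y b 0 k + Y 0 c k + f b c k = 0
        rw [hY0r, hY0l, hN k hk, add_zero, add_zero]
      have hG : ∀ m n, shiftComp (defY Y f) (a, (0 : V)) (defY Y f (b, 0) (c, 0)) m n
          = (shiftComp Y a (Y b c) m n,
             shiftComp Y a (f b c) m n + shiftComp f a (Y b c) m n) := by
        intro m n
        rw [shiftComp_defY hY0r hf0r a 0 (defY Y f (b, 0) (c, 0)) (Y b c)
          (fun k => Y b 0 k + Y 0 c k + f b c k) (fun k => rfl) (hV.trunc b c) hT2 m n]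
        rw [Prod.mk.injEq]
        refine ⟨rfl, ?_⟩
        rw [shiftComp_zero_left hY0l, add_zero]
        congr 1
        simp only [shiftComp]
        exact finsum_congr fun i => by rw [hY0r, hY0l, zero_add, zero_add]
      exact (mulZW_congr hF).symm.trans (hl.trans (mulZW_congr hG))
    constructor
    · intro a b c
      obtain ⟨l, hl⟩ := key a b c
      exact ⟨l, (mulZW_pair_iff.mp hl).1⟩
    · intro a b c
      obtain ⟨l, hl⟩ := key a b c
      exact ⟨l, (mulZW_pair_iff.mp hl).2⟩
  · rintro ⟨hA, hC⟩ ⟨a, a'⟩ ⟨b, b'⟩ ⟨c, c'⟩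
    obtain ⟨l0, h0⟩ := hA a b c
    obtain ⟨l1, h1⟩ := hA a b c'
    obtain ⟨l2, h2⟩ := hA a b' c
    obtain ⟨l3, h3⟩ := hA a' b c
    obtain ⟨N, hN⟩ := hC a b c
    refine ⟨l0 + l1 + l2 + l3 + N, ?_⟩
    set L := l0 + l1 + l2 + l3 + N with hL
    have e0 := mulZW_of_le (show l0 ≤ L by omega) h0
    have e1 := mulZW_of_le (show l1 ≤ L by omega) h1
    have e2 := mulZW_of_le (show l2 ≤ L by omega) h2
    have e3 := mulZW_of_le (show l3 ≤ L by omega) h3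
    have e4 := mulZW_of_le (show N ≤ L by omega) hN
    have hF : ∀ m n, defY Y f (defY Y f (a, a') (b, b') m) (c, c') n
        = (Y (Y a b m) c n,
           Y (Y a b m) c' n + (Y (Y a b' m) c n + Y (Y a' b m) c n + Y (f a b m) c n)
             + f (Y a b m) c n) := by
      intro m n
      simp only [defY]
      rw [Prod.mk.injEq]
      refine ⟨rfl, ?_⟩
      rw [hYaddl, hYaddl]
    have hG : ∀ m n, shiftComp (defY Y f) (a, a') (defY Y f (b, b') (c, c')) m n
        = (shiftComp Y a (Y b c) m n,
           (shiftComp Y a (Y b c') m n + shiftComp Y a (Y b' c) m n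
              + shiftComp Y a (f b c) m n)
             + shiftComp Y a' (Y b c) m n + shiftComp f a (Y b c) m n) := by
      intro m n
      rw [shiftComp_defY hY0r hf0r a a' (defY Y f (b, b') (c, c')) (Y b c)
        (fun k => Y b c' k + Y b' c k + f b c k) (fun k => rfl) (hV.trunc b c)
        (Trnc.add (Trnc.add (hV.trunc b c') (hV.trunc b' c)) (hft b c)) m n]
      rw [Prod.mk.injEq]
      refine ⟨rfl, ?_⟩
      rw [shiftComp_add_right hY0r hYaddr a (fun k => Y b c' k + Y b' c k + f b c k)
          (fun k => Y b c' k + Y b' c k) (f b c) (fun k => rfl)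
          (Trnc.add (hV.trunc b c') (hV.trunc b' c)) (hft b c) m n,
        shiftComp_add_right hY0r hYaddr a (fun k => Y b c' k + Y b' c k)
          (Y b c') (Y b' c) (fun k => rfl) (hV.trunc b c') (hV.trunc b' c) m n]
    have hSnd : mulZW L (fun m n =>
        Y (Y a b m) c' n + (Y (Y a b' m) c n + Y (Y a' b m) c n + Y (f a b m) c n)
          + f (Y a b m) c n)
        = mulZW L (fun m n =>
            (shiftComp Y a (Y b c') m n + shiftComp Y a (Y b' c) m n
               + shiftComp Y a (f b c) m n)
              + shiftComp Y a' (Y b c) m n + shiftComp f a (Y b c) m n) := by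
      funext m n
      calc mulZW L (fun m n =>
            Y (Y a b m) c' n + (Y (Y a b' m) c n + Y (Y a' b m) c n + Y (f a b m) c n)
              + f (Y a b m) c n) m n
          = mulZW L (fun m n => Y (Y a b m) c' n) m n
              + mulZW L (fun m n => Y (Y a b' m) c n) m n
              + mulZW L (fun m n => Y (Y a' b m) c n) m n
              + mulZW L (fun m n => f (Y a b m) c n + Y (f a b m) c n) m n := by
            simp only [mulZW, smul_add, Finset.sum_add_distrib]
            abel
        _ = mulZW L (shiftComp Y a (Y b c')) m n
              + mulZW L (shiftComp Y a (Y b' c)) m n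
              + mulZW L (shiftComp Y a' (Y b c)) m n
              + mulZW L (fun m n => shiftComp Y a (f b c) m n
                  + shiftComp f a (Y b c) m n) m n := by
            rw [congrFun (congrFun e1 m) n, congrFun (congrFun e2 m) n,
              congrFun (congrFun e3 m) n, congrFun (congrFun e4 m) n]
        _ = mulZW L (fun m n =>
              (shiftComp Y a (Y b c') m n + shiftComp Y a (Y b' c) m n
                 + shiftComp Y a (f b c) m n)
                + shiftComp Y a' (Y b c) m n + shiftComp f a (Y b c) m n) m n := by
            simp only [mulZW, smul_add, Finset.sum_add_distrib]
            abel
    calc mulZW L (fun m n => defY Y f (defY Y f (a, a') (b, b') m) (c, c') n)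
        = mulZW L (fun m n => (Y (Y a b m) c n,
            Y (Y a b m) c' n + (Y (Y a b' m) c n + Y (Y a' b m) c n + Y (f a b m) c n)
              + f (Y a b m) c n)) := mulZW_congr hF
      _ = mulZW L (fun m n => (shiftComp Y a (Y b c) m n,
            (shiftComp Y a (Y b c') m n + shiftComp Y a (Y b' c) m n
               + shiftComp Y a (f b c) m n)
              + shiftComp Y a' (Y b c) m n + shiftComp f a (Y b c) m n)) :=
          mulZW_pair_iff.mpr ⟨e0, hSnd⟩
      _ = mulZW L (shiftComp (defY Y f) (a, a') (defY Y f (b, b') (c, c'))) :=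
          (mulZW_congr hG).symm

end VertexCohomology
end
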